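/- arXiv:1605.04851 — 5 statements merged into one kernel-verified Lean document; each statement's English description precedes it below -/
import Mathlib

section
/- If a triple (E₁,E₂,γ) with γ > 0 is achievable by fixed-length tests with rejection, then the pair (E₁,E₂) is achievable by γ-almost-fixed-length tests. -/
open Real Filter Finset MeasureTheory
open scoped Classical

variable {𝒳 : Type*} [Fintype 𝒳] [DecidableEq 𝒳] [Nonempty 𝒳]

/-- Kullback–Leibler divergence `D(Q‖P)` between pmfs on a finite alphabet. -/
noncomputable def kl (Q P : 𝒳 → ℝ) : ℝ :=
  ∑ x, Q x * Real.log (Q x / P x)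

/-- The `λ`-tilted distribution `P^(λ)` of `P₁` and `P₂`. -/
noncomputable def tilt (P₁ P₂ : 𝒳 → ℝ) (l : ℝ) : 𝒳 → ℝ :=
  fun x => P₁ x ^ (1 - l) * P₂ x ^ l / ∑ a, P₁ a ^ (1 - l) * P₂ a ^ l

/-- Probability of a set of length-`N` sample paths under i.i.d. sampling from `P`. -/
noncomputable def prodProb (P : 𝒳 → ℝ) {N : ℕ} (S : Set (Fin N → 𝒳)) : ℝ :=
  ∑ ω : Fin N → 𝒳, S.indicator (fun ω' => ∏ i, P (ω' i)) ω

/-- The fixed-length error-exponent region `R_FD`. -/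
def RFD (P₁ P₂ : 𝒳 → ℝ) : Set (ℝ × ℝ) :=
  {p | 0 ≤ p.1 ∧ 0 ≤ p.2 ∧
    ∃ l ∈ Set.Icc (0:ℝ) 1,
      p.1 ≤ kl (tilt P₁ P₂ l) P₁ ∧ p.2 ≤ kl (tilt P₁ P₂ l) P₂}

/-- `E₁(γ) = max{D(P^(λ)‖P₁) : λ ∈ [0,1], D(P^(λ)‖P₂) ≥ γ}` (sup of the empty set is 0). -/
noncomputable def E1exp (P₁ P₂ : 𝒳 → ℝ) (γ : ℝ) : ℝ :=
  sSup {E | ∃ l ∈ Set.Icc (0:ℝ) 1, γ ≤ kl (tilt P₁ P₂ l) P₂ ∧ E = kl (tilt P₁ P₂ l) P₁}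

/-- `E₂(γ) = max{D(P^(λ)‖P₂) : λ ∈ [0,1], D(P^(λ)‖P₁) ≥ γ}` (sup of the empty set is 0). -/
noncomputable def E2exp (P₁ P₂ : 𝒳 → ℝ) (γ : ℝ) : ℝ :=
  sSup {E | ∃ l ∈ Set.Icc (0:ℝ) 1, γ ≤ kl (tilt P₁ P₂ l) P₁ ∧ E = kl (tilt P₁ P₂ l) P₂}

/-- A sequential hypothesis test whose stopping time is bounded by `N`:
a stopping time `τ` for the coordinate filtration, together with decision events
`A1`, `A2` that are determined by the samples observed up to time `τ`,
are disjoint, and exhaust the sample space. -/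
structure HypTest (𝒳 : Type*) (N : ℕ) where
  τ : (Fin N → 𝒳) → ℕ
  A1 : Set (Fin N → 𝒳)
  A2 : Set (Fin N → 𝒳)
  tau_le : ∀ ω, τ ω ≤ N
  stopping : ∀ ω ω', (∀ i : Fin N, (i : ℕ) < τ ω → ω i = ω' i) → τ ω' = τ ω
  adapted1 : ∀ ω ω', (∀ i : Fin N, (i : ℕ) < τ ω → ω i = ω' i) → (ω ∈ A1 ↔ ω' ∈ A1)
  adapted2 : ∀ ω ω', (∀ i : Fin N, (i : ℕ) < τ ω → ω i = ω' i) → (ω ∈ A2 ↔ ω' ∈ A2)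
  disj : Disjoint A1 A2
  exhaust : A1 ∪ A2 = Set.univ

/-- `(E₁, E₂)` is achievable by `γ`-almost-fixed-length tests. -/
def AFLAchievable (P₁ P₂ : 𝒳 → ℝ) (γ E₁ E₂ : ℝ) : Prop :=
  0 ≤ E₁ ∧ 0 ≤ E₂ ∧
  ∃ c : ℝ, 0 < c ∧ ∃ l : ℕ, 0 < l ∧
    ∀ δ : ℝ, 0 < δ → ∃ n₀ : ℕ, ∀ n : ℕ, n₀ ≤ n →
      ∃ N : ℕ, (N : ℝ) ≤ c * (n : ℝ) ^ l ∧
        ∃ T : HypTest 𝒳 N,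
          prodProb P₁ {ω | n < T.τ ω} ≤ Real.exp (-(γ * n)) ∧
          prodProb P₂ {ω | n < T.τ ω} ≤ Real.exp (-(γ * n)) ∧
          prodProb P₁ T.A2 ≤ Real.exp (-((E₁ - δ) * n)) ∧
          prodProb P₂ T.A1 ≤ Real.exp (-((E₂ - δ) * n))

/-- `(E₁, E₂, E_Ω)` is achievable by fixed-length tests with a rejection option. -/
def RejAchievable (P₁ P₂ : 𝒳 → ℝ) (E₁ E₂ EΩ : ℝ) : Prop :=
  0 ≤ E₁ ∧ 0 ≤ E₂ ∧ 0 ≤ EΩ ∧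
  ∀ δ : ℝ, 0 < δ → ∃ n₀ : ℕ, ∀ n : ℕ, n₀ ≤ n →
    ∃ A1 A2 AΩ : Set (Fin n → 𝒳),
      Disjoint A1 A2 ∧ Disjoint A1 AΩ ∧ Disjoint A2 AΩ ∧ A1 ∪ A2 ∪ AΩ = Set.univ ∧
      prodProb P₁ A2 ≤ Real.exp (-((E₁ - δ) * n)) ∧
      prodProb P₂ A1 ≤ Real.exp (-((E₂ - δ) * n)) ∧
      prodProb P₁ AΩ + prodProb P₂ AΩ ≤ Real.exp (-((EΩ - δ) * n))

/-- Sum of the log-likelihood ratios of the first `n` samples. -/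
noncomputable def S1 (P₁ P₂ : 𝒳 → ℝ) (n : ℕ) {N : ℕ} (ω : Fin N → 𝒳) : ℝ :=
  ∑ i ∈ Finset.univ.filter (fun i : Fin N => (i : ℕ) < n),
    Real.log (P₁ (ω i) / P₂ (ω i))

/-- Sum of the log-likelihood ratios of the samples after time `n`. -/
noncomputable def S2 (P₁ P₂ : 𝒳 → ℝ) (n : ℕ) {N : ℕ} (ω : Fin N → 𝒳) : ℝ :=
  ∑ i ∈ Finset.univ.filter (fun i : Fin N => n ≤ (i : ℕ)),
    Real.log (P₁ (ω i) / P₂ (ω i))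

/-- Event that the two-phase test (phase-one thresholds `α₁ > β₁`, phase-two threshold `α`)
chooses `H₁`. -/
def twoPhaseA1 (P₁ P₂ : 𝒳 → ℝ) (k n : ℕ) (α₁ β₁ α : ℝ) : Set (Fin ((k + 1) * n) → 𝒳) :=
  {ω | α₁ ≤ S1 P₁ P₂ n ω / n ∨
    (β₁ < S1 P₁ P₂ n ω / n ∧ S1 P₁ P₂ n ω / n < α₁ ∧ α ≤ S2 P₁ P₂ n ω / (k * n))}

/-- Event that the two-phase test chooses `H₂`. -/
def twoPhaseA2 (P₁ P₂ : 𝒳 → ℝ) (k n : ℕ) (α₁ β₁ α : ℝ) : Set (Fin ((k + 1) * n) → 𝒳) :=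
  {ω | S1 P₁ P₂ n ω / n ≤ β₁ ∨
    (β₁ < S1 P₁ P₂ n ω / n ∧ S1 P₁ P₂ n ω / n < α₁ ∧ S2 P₁ P₂ n ω / (k * n) < α)}

/-- Stopping time of the two-phase test: `n` if phase one is decisive, `(k+1)n` otherwise. -/
noncomputable def twoPhaseTau (P₁ P₂ : 𝒳 → ℝ) (k n : ℕ) (α₁ β₁ : ℝ)
    (ω : Fin ((k + 1) * n) → 𝒳) : ℕ :=
  if β₁ < S1 P₁ P₂ n ω / n ∧ S1 P₁ P₂ n ω / n < α₁ then (k + 1) * n else n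
set_option linter.unusedSectionVars false
set_option maxHeartbeats 1000000

section basics
variable {P : 𝒳 → ℝ}

lemma prodProb_nonneg (hP : ∀ x, 0 ≤ P x) {N : ℕ} (S : Set (Fin N → 𝒳)) :
    0 ≤ prodProb P S := by
  apply Finset.sum_nonneg
  intro ω _
  apply Set.indicator_nonneg
  intro a _
  exact Finset.prod_nonneg fun i _ => hP _

lemma prodProb_mono (hP : ∀ x, 0 ≤ P x) {N : ℕ} {S T : Set (Fin N → 𝒳)} (h : S ⊆ T) :
    prodProb P S ≤ prodProb P T := by
  apply Finset.sum_le_sum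
  intro ω _
  exact Set.indicator_le_indicator_of_subset h
    (fun a => Finset.prod_nonneg fun i _ => hP _) ω

lemma prodProb_union_le (hP : ∀ x, 0 ≤ P x) {N : ℕ} (S T : Set (Fin N → 𝒳)) :
    prodProb P (S ∪ T) ≤ prodProb P S + prodProb P T := by
  unfold prodProb
  rw [← Finset.sum_add_distrib]
  apply Finset.sum_le_sum
  intro ω _
  have h0 : 0 ≤ ∏ i, P (ω i) := Finset.prod_nonneg fun i _ => hP _
  by_cases hS : ω ∈ S
  · by_cases hT : ω ∈ T
    · rw [Set.indicator_of_mem (Set.mem_union_left _ hS), Set.indicator_of_mem hS,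
        Set.indicator_of_mem hT]
      linarith
    · rw [Set.indicator_of_mem (Set.mem_union_left _ hS), Set.indicator_of_mem hS,
        Set.indicator_of_notMem hT]; simp
  · by_cases hT : ω ∈ T
    · rw [Set.indicator_of_mem (Set.mem_union_right _ hT), Set.indicator_of_notMem hS,
        Set.indicator_of_mem hT]; simp
    · rw [Set.indicator_of_notMem hS, Set.indicator_of_notMem hT,
        Set.indicator_of_notMem (fun h => h.elim hS hT)]; simp

lemma prodProb_empty {N : ℕ} : prodProb P (∅ : Set (Fin N → 𝒳)) = 0 := by
  simp [prodProb]

lemma sum_pi_prod {N : ℕ} (F : Fin N → 𝒳 → ℝ) :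
    ∑ ω : Fin N → 𝒳, ∏ i, F i (ω i) = ∏ i, ∑ x, F i x := by
  rw [Finset.prod_univ_sum]
  rw [Fintype.piFinset_univ]

lemma prodProb_univ (hsum : ∑ x, P x = 1) {N : ℕ} :
    prodProb P (Set.univ : Set (Fin N → 𝒳)) = 1 := by
  unfold prodProb
  simp only [Set.indicator_univ]
  rw [sum_pi_prod (fun _ x => P x)]
  simp [hsum]

lemma prodProb_le_one (hP : ∀ x, 0 ≤ P x) (hsum : ∑ x, P x = 1) {N : ℕ}
    (S : Set (Fin N → 𝒳)) : prodProb P S ≤ 1 := by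
  calc prodProb P S ≤ prodProb P Set.univ := prodProb_mono hP (Set.subset_univ S)
  _ = 1 := prodProb_univ hsum

lemma prodProb_le_of_pointwise {N : ℕ} (S : Set (Fin N → 𝒳)) (F : Fin N → 𝒳 → ℝ)
    (hF : ∀ i x, 0 ≤ F i x)
    (hle : ∀ ω : Fin N → 𝒳, ω ∈ S → ∏ i, P (ω i) ≤ ∏ i, F i (ω i)) :
    prodProb P S ≤ ∏ i, ∑ x, F i x := by
  rw [← sum_pi_prod]
  apply Finset.sum_le_sum
  intro ω _
  by_cases hω : ω ∈ S
  · rw [Set.indicator_of_mem hω]; exact hle ω hω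
  · rw [Set.indicator_of_notMem hω]
    exact Finset.prod_nonneg fun i _ => hF i (ω i)

lemma card_filter_lt {N n : ℕ} (h : n ≤ N) :
    (Finset.univ.filter (fun i : Fin N => (i : ℕ) < n)).card = n := by
  have : (Finset.univ.filter (fun i : Fin N => (i : ℕ) < n))
      = Finset.map (Fin.castLEEmb h) Finset.univ := by
    ext i
    simp only [Finset.mem_filter, Finset.mem_univ, true_and, Finset.mem_map,
      Fin.castLEEmb, Function.Embedding.coeFn_mk]
    constructor
    · intro hi
      exact ⟨⟨(i : ℕ), hi⟩, rfl⟩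
    · rintro ⟨j, rfl⟩
      exact j.isLt
  rw [this, Finset.card_map, Finset.card_univ, Fintype.card_fin]

lemma card_filter_not_lt {N n : ℕ} (h : n ≤ N) :
    (Finset.univ.filter (fun i : Fin N => ¬ (i : ℕ) < n)).card = N - n := by
  have h1 := Finset.card_filter_add_card_filter_not
    (s := (Finset.univ : Finset (Fin N))) (p := fun i : Fin N => (i : ℕ) < n)
  rw [card_filter_lt h, Finset.card_univ, Fintype.card_fin] at h1
  omega

end basics

section tiltbasics

variable (P₁ P₂ : 𝒳 → ℝ)

/-- normalizer -/
noncomputable def Lam (l : ℝ) : ℝ := ∑ x, P₁ x ^ (1 - l) * P₂ x ^ l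

/-- mean of the log-likelihood ratio under the tilted distribution -/
noncomputable def tparam (l : ℝ) : ℝ := ∑ x, tilt P₁ P₂ l x * Real.log (P₁ x / P₂ x)

variable {P₁ P₂}
variable (h1pos : ∀ x, 0 < P₁ x) (h2pos : ∀ x, 0 < P₂ x)
include h1pos h2pos

lemma Lam_pos (l : ℝ) : 0 < Lam P₁ P₂ l :=
  Finset.sum_pos (fun x _ => mul_pos (rpow_pos_of_pos (h1pos x) _) (rpow_pos_of_pos (h2pos x) _))
    Finset.univ_nonempty

lemma tilt_pos (l : ℝ) (x : 𝒳) : 0 < tilt P₁ P₂ l x :=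
  div_pos (mul_pos (rpow_pos_of_pos (h1pos x) _) (rpow_pos_of_pos (h2pos x) _))
    (Lam_pos h1pos h2pos l)

lemma tilt_sum (l : ℝ) : ∑ x, tilt P₁ P₂ l x = 1 := by
  unfold tilt
  rw [← Finset.sum_div]
  exact div_self (ne_of_gt (Lam_pos h1pos h2pos l))

lemma log_tilt_div_one (l : ℝ) (x : 𝒳) :
    Real.log (tilt P₁ P₂ l x / P₁ x) = -(l * Real.log (P₁ x / P₂ x)) - Real.log (Lam P₁ P₂ l) := by
  have hL := Lam_pos h1pos h2pos (P₁ := P₁) (P₂ := P₂) l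
  have h1 := h1pos x
  have h2 := h2pos x
  have key : tilt P₁ P₂ l x / P₁ x = (P₁ x / P₂ x) ^ (-l) / Lam P₁ P₂ l := by
    unfold tilt Lam
    have hpl : (0:ℝ) < P₁ x ^ l := rpow_pos_of_pos h1 _
    have hp2l : (0:ℝ) < P₂ x ^ l := rpow_pos_of_pos h2 _
    rw [show (1 : ℝ) - l = 1 + (-l) by ring, Real.rpow_add h1, Real.rpow_one,
      Real.div_rpow (le_of_lt h1) (le_of_lt h2), Real.rpow_neg (le_of_lt h1),
      Real.rpow_neg (le_of_lt h2)]
    unfold Lam at hL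
    rw [show (1 : ℝ) - l = 1 + (-l) by ring] at hL
    set s := ∑ a : 𝒳, P₁ a ^ (1 + -l) * P₂ a ^ l with hs
    field_simp
  rw [key, Real.log_div (by positivity) (ne_of_gt hL),
    Real.log_rpow (div_pos h1 h2)]
  ring

lemma kl_tilt_one (l : ℝ) :
    kl (tilt P₁ P₂ l) P₁ = -(l * tparam P₁ P₂ l) - Real.log (Lam P₁ P₂ l) := by
  unfold kl
  have : ∀ x, tilt P₁ P₂ l x * Real.log (tilt P₁ P₂ l x / P₁ x)
      = (-l) * (tilt P₁ P₂ l x * Real.log (P₁ x / P₂ x))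
        + (-(Real.log (Lam P₁ P₂ l))) * tilt P₁ P₂ l x := by
    intro x
    rw [log_tilt_div_one h1pos h2pos l x]
    ring
  rw [Finset.sum_congr rfl (fun x _ => this x), Finset.sum_add_distrib,
    ← Finset.mul_sum, ← Finset.mul_sum, tilt_sum h1pos h2pos l]
  unfold tparam
  ring

end tiltbasics

section more
variable {P₁ P₂ : 𝒳 → ℝ}
variable (h1pos : ∀ x, 0 < P₁ x) (h2pos : ∀ x, 0 < P₂ x)
include h1pos h2pos

lemma log_tilt_div_two (l : ℝ) (x : 𝒳) :
    Real.log (tilt P₁ P₂ l x / P₂ x)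
      = (1 - l) * Real.log (P₁ x / P₂ x) - Real.log (Lam P₁ P₂ l) := by
  have hL := Lam_pos h1pos h2pos (P₁ := P₁) (P₂ := P₂) l
  have h1 := h1pos x
  have h2 := h2pos x
  have key : tilt P₁ P₂ l x / P₂ x = (P₁ x / P₂ x) ^ (1 - l) / Lam P₁ P₂ l := by
    unfold tilt Lam
    have hmul : P₂ x ^ (1 - l) * P₂ x ^ l = P₂ x := by
      rw [← Real.rpow_add h2]; norm_num
    rw [Real.div_rpow (le_of_lt h1) (le_of_lt h2)]
    unfold Lam at hL
    set s := ∑ a : 𝒳, P₁ a ^ (1 - l) * P₂ a ^ l with hs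
    have h2l : (0:ℝ) < P₂ x ^ (1 - l) := rpow_pos_of_pos h2 _
    field_simp
    linear_combination hmul
  rw [key, Real.log_div (by positivity) (ne_of_gt hL),
    Real.log_rpow (div_pos h1 h2)]

lemma kl_tilt_two (l : ℝ) :
    kl (tilt P₁ P₂ l) P₂ = (1 - l) * tparam P₁ P₂ l - Real.log (Lam P₁ P₂ l) := by
  unfold kl
  have : ∀ x, tilt P₁ P₂ l x * Real.log (tilt P₁ P₂ l x / P₂ x)
      = (1 - l) * (tilt P₁ P₂ l x * Real.log (P₁ x / P₂ x))
        + (-(Real.log (Lam P₁ P₂ l))) * tilt P₁ P₂ l x := by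
    intro x
    rw [log_tilt_div_two h1pos h2pos l x]
    ring
  rw [Finset.sum_congr rfl (fun x _ => this x), Finset.sum_add_distrib,
    ← Finset.mul_sum, ← Finset.mul_sum, tilt_sum h1pos h2pos l]
  unfold tparam
  ring

end more

section chernoff
variable {P₁ P₂ : 𝒳 → ℝ}

lemma chernoff_core (P : 𝒳 → ℝ) (hP : ∀ x, 0 < P x) (hPsum : ∑ x, P x = 1)
    (ψ : 𝒳 → ℝ) {n N : ℕ} (hn : n ≤ N) (S : Set (Fin N → 𝒳))
    (hS : ∀ ω ∈ S, 0 ≤ ∑ i ∈ Finset.univ.filter (fun i : Fin N => (i : ℕ) < n), ψ (ω i)) :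
    prodProb P S ≤ (∑ x, P x * Real.exp (ψ x)) ^ n := by
  have key := prodProb_le_of_pointwise (P := P) S
    (fun i x => P x * (if (i : ℕ) < n then Real.exp (ψ x) else 1))
    (by
      intro i x
      split_ifs
      · exact mul_nonneg (hP x).le (Real.exp_pos _).le
      · simpa using (hP x).le)
    (by
      intro ω hω
      rw [Finset.prod_mul_distrib]
      have h1' : (1:ℝ) ≤ ∏ i : Fin N, (if (i : ℕ) < n then Real.exp (ψ (ω i)) else 1) := by
        rw [← Finset.prod_filter (s := (Finset.univ : Finset (Fin N)))
          (fun i : Fin N => (i : ℕ) < n) (fun i => Real.exp (ψ (ω i))), ← Real.exp_sum]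
        exact Real.one_le_exp (hS ω hω)
      exact le_mul_of_one_le_right
        (Finset.prod_nonneg (fun i _ => (hP (ω i)).le)) h1')
  refine le_trans key (le_of_eq ?_)
  have heq : ∀ i : Fin N, (∑ x, P x * (if (i : ℕ) < n then Real.exp (ψ x) else 1))
      = (if (i : ℕ) < n then (∑ x, P x * Real.exp (ψ x)) else 1) := by
    intro i
    split_ifs with h
    · simp
    · simp [hPsum]
  rw [Finset.prod_congr rfl (fun i _ => heq i),
    ← Finset.prod_filter (s := (Finset.univ : Finset (Fin N)))
      (fun i : Fin N => (i : ℕ) < n) (fun _ => ∑ x, P x * Real.exp (ψ x)),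
    Finset.prod_const, card_filter_lt hn]

end chernoff


section chernoffS1
variable {P₁ P₂ : 𝒳 → ℝ}
variable (h1pos : ∀ x, 0 < P₁ x) (h2pos : ∀ x, 0 < P₂ x)
variable (h1sum : ∑ x, P₁ x = 1) (h2sum : ∑ x, P₂ x = 1)

omit [Nonempty 𝒳] in
lemma sum_filter_sub_S1 {n N : ℕ} (hn : n ≤ N) (c : ℝ) (ω : Fin N → 𝒳) :
    ∑ i ∈ Finset.univ.filter (fun i : Fin N => (i : ℕ) < n),
      (c - Real.log (P₁ (ω i) / P₂ (ω i))) = n * c - S1 P₁ P₂ n ω := by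
  rw [Finset.sum_sub_distrib, Finset.sum_const, card_filter_lt hn]
  unfold S1
  push_cast
  ring

include h1pos h2pos h1sum in
lemma chernoff1 {n N : ℕ} (hn : n ≤ N) {l : ℝ} (hl : l ∈ Set.Icc (0:ℝ) 1) :
    prodProb P₁ {ω : Fin N → 𝒳 | S1 P₁ P₂ n ω ≤ n * tparam P₁ P₂ l}
      ≤ Real.exp (-(n * kl (tilt P₁ P₂ l) P₁)) := by
  have hL := Lam_pos h1pos h2pos (P₁ := P₁) (P₂ := P₂) l
  have key := chernoff_core P₁ h1pos h1sum
    (fun x => l * (tparam P₁ P₂ l - Real.log (P₁ x / P₂ x))) hn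
    {ω : Fin N → 𝒳 | S1 P₁ P₂ n ω ≤ n * tparam P₁ P₂ l}
    (by
      intro ω hω
      simp only [Set.mem_setOf_eq] at hω
      rw [← Finset.mul_sum, sum_filter_sub_S1 hn]
      exact mul_nonneg hl.1 (by linarith))
  refine le_trans key ?_
  have hsum_eq : (∑ x, P₁ x * Real.exp (l * (tparam P₁ P₂ l - Real.log (P₁ x / P₂ x))))
      = Real.exp (l * tparam P₁ P₂ l) * Lam P₁ P₂ l := by
    unfold Lam
    rw [Finset.mul_sum]
    apply Finset.sum_congr rfl
    intro x _
    have h1 := h1pos x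
    have h2 := h2pos x
    have hr : (0:ℝ) < P₁ x / P₂ x := div_pos h1 h2
    rw [mul_sub, Real.exp_sub]
    have hrl : Real.exp (l * Real.log (P₁ x / P₂ x)) = (P₁ x / P₂ x) ^ l := by
      rw [Real.rpow_def_of_pos hr, mul_comm]
    rw [hrl, Real.div_rpow (le_of_lt h1) (le_of_lt h2)]
    have hmul1 : P₁ x ^ (1 - l) * P₁ x ^ l = P₁ x := by
      rw [← Real.rpow_add h1]; norm_num
    have hp1l : (0:ℝ) < P₁ x ^ l := rpow_pos_of_pos h1 _
    have hp2l : (0:ℝ) < P₂ x ^ l := rpow_pos_of_pos h2 _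
    field_simp
    linear_combination (-1) * hmul1
  rw [hsum_eq, kl_tilt_one h1pos h2pos]
  rw [show Real.exp (l * tparam P₁ P₂ l) * Lam P₁ P₂ l
      = Real.exp (l * tparam P₁ P₂ l + Real.log (Lam P₁ P₂ l)) by
    rw [Real.exp_add, Real.exp_log hL]]
  rw [← Real.exp_nat_mul]
  apply le_of_eq
  congr 1
  ring

include h1pos h2pos h2sum in
lemma chernoff2 {n N : ℕ} (hn : n ≤ N) {l : ℝ} (hl : l ∈ Set.Icc (0:ℝ) 1) :
    prodProb P₂ {ω : Fin N → 𝒳 | n * tparam P₁ P₂ l ≤ S1 P₁ P₂ n ω}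
      ≤ Real.exp (-(n * kl (tilt P₁ P₂ l) P₂)) := by
  have hL := Lam_pos h1pos h2pos (P₁ := P₁) (P₂ := P₂) l
  have key := chernoff_core P₂ h2pos h2sum
    (fun x => (1 - l) * (Real.log (P₁ x / P₂ x) - tparam P₁ P₂ l)) hn
    {ω : Fin N → 𝒳 | n * tparam P₁ P₂ l ≤ S1 P₁ P₂ n ω}
    (by
      intro ω hω
      simp only [Set.mem_setOf_eq] at hω
      have : ∀ i ∈ Finset.univ.filter (fun i : Fin N => (i : ℕ) < n),
          (1 - l) * (Real.log (P₁ (ω i) / P₂ (ω i)) - tparam P₁ P₂ l)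
          = -((1 - l) * (tparam P₁ P₂ l - Real.log (P₁ (ω i) / P₂ (ω i)))) := by
        intro i _; ring
      rw [Finset.sum_congr rfl this, Finset.sum_neg_distrib, ← Finset.mul_sum,
        sum_filter_sub_S1 hn]
      have h1l : (0:ℝ) ≤ 1 - l := by linarith [hl.2]
      have := mul_nonneg h1l (by linarith : (0:ℝ) ≤ S1 P₁ P₂ n ω - n * tparam P₁ P₂ l)
      nlinarith)
  refine le_trans key ?_
  have hsum_eq : (∑ x, P₂ x * Real.exp ((1 - l) * (Real.log (P₁ x / P₂ x) - tparam P₁ P₂ l)))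
      = Real.exp (-((1 - l) * tparam P₁ P₂ l)) * Lam P₁ P₂ l := by
    unfold Lam
    rw [Finset.mul_sum]
    apply Finset.sum_congr rfl
    intro x _
    have h1 := h1pos x
    have h2 := h2pos x
    have hr : (0:ℝ) < P₁ x / P₂ x := div_pos h1 h2
    rw [show (1 - l) * (Real.log (P₁ x / P₂ x) - tparam P₁ P₂ l)
        = (1 - l) * Real.log (P₁ x / P₂ x) + (-((1 - l) * tparam P₁ P₂ l)) by ring,
      Real.exp_add]
    have hrl : Real.exp ((1 - l) * Real.log (P₁ x / P₂ x)) = (P₁ x / P₂ x) ^ (1 - l) := by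
      rw [Real.rpow_def_of_pos hr, mul_comm]
    rw [hrl, Real.div_rpow (le_of_lt h1) (le_of_lt h2)]
    have hmul1 : P₂ x ^ (1 - l) * P₂ x ^ l = P₂ x := by
      rw [← Real.rpow_add h2]; norm_num
    have hp1l : (0:ℝ) < P₁ x ^ (1 - l) := rpow_pos_of_pos h1 _
    have hp2l : (0:ℝ) < P₂ x ^ (1 - l) := rpow_pos_of_pos h2 _
    field_simp
    linear_combination (-1) * hmul1
  rw [hsum_eq, kl_tilt_two h1pos h2pos]
  rw [show Real.exp (-((1 - l) * tparam P₁ P₂ l)) * Lam P₁ P₂ l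
      = Real.exp (-((1 - l) * tparam P₁ P₂ l) + Real.log (Lam P₁ P₂ l)) by
    rw [Real.exp_add, Real.exp_log hL]]
  rw [← Real.exp_nat_mul]
  apply le_of_eq
  congr 1
  ring

end chernoffS1


section converse
variable {P₁ P₂ : 𝒳 → ℝ}

omit [Nonempty 𝒳] in
lemma filter_lt_self (n : ℕ) :
    (Finset.univ.filter (fun i : Fin n => (i : ℕ) < n)) = Finset.univ := by
  ext i
  simp [i.isLt]

lemma tail_bound (Q : 𝒳 → ℝ) (hQ : ∀ x, 0 < Q x) (hQsum : ∑ x, Q x = 1)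
    (h : 𝒳 → ℝ) {η : ℝ} (hη : 0 < η) :
    ∃ n₂ : ℕ, ∀ n : ℕ, n₂ ≤ n →
      prodProb Q {ω : Fin n → 𝒳 | (n : ℝ) * ((∑ x, Q x * h x) + η) < ∑ i, h (ω i)} ≤ 1/12 := by
  set μ := ∑ x, Q x * h x with hμ
  set B := (∑ x, |h x - μ|) + 1 with hBdef
  have hB1 : (1:ℝ) ≤ B := by
    have : (0:ℝ) ≤ ∑ x, |h x - μ| := Finset.sum_nonneg fun x _ => abs_nonneg _
    linarith
  have hBpos : (0:ℝ) < B := by linarith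
  have hBx : ∀ x, |h x - μ| ≤ B := by
    intro x
    have h1 : |h x - μ| ≤ ∑ x, |h x - μ| :=
      Finset.single_le_sum (f := fun x => |h x - μ|) (fun x _ => abs_nonneg _) (Finset.mem_univ x)
    linarith
  clear_value B
  set s := min (1/B) (2*η/(3*B^2)) with hsdef
  have hle : s ≤ 2*η/(3*B^2) := min_le_right _ _
  have hle1 : s ≤ 1/B := min_le_left _ _
  have hspos : 0 < s := lt_min (by positivity) (by positivity)
  clear_value s
  have hsB : s * B ≤ 1 := by
    calc s * B ≤ (1/B) * B := by nlinarith
    _ = 1 := by field_simp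
  have hs2 : (3/4)*s^2*B^2 ≤ s*η/2 := by
    have h2 : s * (3*B^2) ≤ 2*η := (le_div_iff₀ (by positivity)).1 hle
    nlinarith [mul_le_mul_of_nonneg_left h2 hspos.le]
  -- pointwise MGF bound
  have hmgf : ∑ x, Q x * Real.exp (s*(h x - μ - η)) ≤ Real.exp (-(s*η/2)) := by
    have hpt : ∀ x, Real.exp (s*(h x - μ)) ≤ 1 + s*(h x - μ) + (3/4)*(s*(h x - μ))^2 := by
      intro x
      have habs : |s*(h x - μ)| ≤ 1 := by
        rw [abs_mul, abs_of_pos hspos]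
        calc s * |h x - μ| ≤ s * B := by nlinarith [hBx x, abs_nonneg (h x - μ)]
        _ ≤ 1 := hsB
      have hb := Real.exp_bound habs (n := 2) (by norm_num)
      have hsum2 : ∑ m ∈ Finset.range 2, (s*(h x - μ))^m / (m.factorial : ℝ)
          = 1 + s*(h x - μ) := by
        simp [Finset.sum_range_succ]
      rw [hsum2] at hb
      have := abs_le.1 hb
      have hc : ((2:ℕ).succ : ℝ) / ((2:ℕ).factorial * (2:ℕ)) = 3/4 := by norm_num [Nat.factorial]
      rw [hc] at this
      have := this.2
      nlinarith [sq_abs (s*(h x - μ))]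
    have hsum_le : ∑ x, Q x * Real.exp (s*(h x - μ)) ≤ 1 + (3/4)*s^2*B^2 := by
      have step : ∑ x, Q x * Real.exp (s*(h x - μ))
          ≤ ∑ x, Q x * (1 + s*(h x - μ) + (3/4)*(s*(h x - μ))^2) := by
        apply Finset.sum_le_sum
        intro x _
        exact mul_le_mul_of_nonneg_left (hpt x) (hQ x).le
      refine le_trans step ?_
      have hvar : ∑ x, Q x * (h x - μ)^2 ≤ B^2 := by
        calc ∑ x, Q x * (h x - μ)^2 ≤ ∑ x, Q x * B^2 := by
              apply Finset.sum_le_sum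
              intro x _
              have := hBx x
              have h2 : (h x - μ)^2 ≤ B^2 := by nlinarith [sq_abs (h x - μ), abs_nonneg (h x - μ)]
              nlinarith [(hQ x).le]
        _ = B^2 := by rw [← Finset.sum_mul, hQsum, one_mul]
      have der : ∀ x, Q x * (1 + s*(h x - μ) + (3/4)*(s*(h x - μ))^2)
          = Q x * (1 - s*μ) + (Q x * h x) * s + (Q x * (h x - μ)^2) * ((3/4)*s^2) := by
        intro x; ring
      rw [Finset.sum_congr rfl fun x _ => der x, Finset.sum_add_distrib,
        Finset.sum_add_distrib, ← Finset.sum_mul, ← Finset.sum_mul, ← Finset.sum_mul,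
        hQsum, ← hμ]
      nlinarith [sq_nonneg s]
    have heq : ∀ x, Real.exp (s*(h x - μ - η)) = Real.exp (-(s*η)) * Real.exp (s*(h x - μ)) := by
      intro x
      rw [← Real.exp_add]
      congr 1
      ring
    calc ∑ x, Q x * Real.exp (s*(h x - μ - η))
        = Real.exp (-(s*η)) * ∑ x, Q x * Real.exp (s*(h x - μ)) := by
          rw [Finset.mul_sum]
          apply Finset.sum_congr rfl
          intro x _
          rw [heq x]; ring
    _ ≤ Real.exp (-(s*η)) * Real.exp (s*η/2) := by
          apply mul_le_mul_of_nonneg_left _ (Real.exp_pos _).le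
          calc ∑ x, Q x * Real.exp (s*(h x - μ)) ≤ 1 + (3/4)*s^2*B^2 := hsum_le
          _ ≤ 1 + s*η/2 := by linarith
          _ ≤ Real.exp (s*η/2) := by
              have := Real.add_one_le_exp (s*η/2)
              linarith
    _ = Real.exp (-(s*η/2)) := by rw [← Real.exp_add]; congr 1; ring
  refine ⟨⌈24/(s*η)⌉₊, fun n hn => ?_⟩
  have key := chernoff_core Q hQ hQsum (fun x => s*(h x - μ - η)) (le_refl n)
    {ω : Fin n → 𝒳 | (n : ℝ) * (μ + η) < ∑ i, h (ω i)}
    (by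
      intro ω hω
      simp only [Set.mem_setOf_eq] at hω
      rw [filter_lt_self]
      have heq2 : ∑ i : Fin n, s*(h (ω i) - μ - η) = s * ((∑ i, h (ω i)) - n*(μ+η)) := by
        calc ∑ i : Fin n, s*(h (ω i) - μ - η)
            = ∑ i : Fin n, (s * h (ω i) - s * (μ + η)) := by
              apply Finset.sum_congr rfl; intro i _; ring
        _ = s * ((∑ i, h (ω i)) - n*(μ+η)) := by
              rw [Finset.sum_sub_distrib, Finset.sum_const, Finset.card_univ,
                Fintype.card_fin, ← Finset.mul_sum, nsmul_eq_mul]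
              ring
      rw [heq2]
      nlinarith)
  refine le_trans key ?_
  have hstep : (∑ x, Q x * Real.exp (s*(h x - μ - η))) ^ n ≤ Real.exp (-(s*η/2)) ^ n := by
    apply pow_le_pow_left₀ _ hmgf
    apply Finset.sum_nonneg
    intro x _
    exact mul_nonneg (hQ x).le (Real.exp_pos _).le
  refine le_trans hstep ?_
  rw [← Real.exp_nat_mul]
  have hn' : 24/(s*η) ≤ (n:ℝ) := by
    calc 24/(s*η) ≤ (⌈24/(s*η)⌉₊ : ℝ) := Nat.le_ceil _
    _ ≤ n := by exact_mod_cast hn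
  have h12 : (12:ℝ) ≤ (n:ℝ) * (s*η/2) := by
    rw [div_le_iff₀ (by positivity)] at hn'
    nlinarith
  have hexp : (12:ℝ) ≤ Real.exp ((n:ℝ) * (s*η/2)) := by
    have := Real.add_one_le_exp ((n:ℝ) * (s*η/2))
    linarith
  have hprod : Real.exp ((n:ℝ) * -(s*η/2)) = (Real.exp ((n:ℝ)*(s*η/2)))⁻¹ := by
    rw [← Real.exp_neg]
    congr 1
    ring
  rw [hprod]
  have hinv : (Real.exp ((n:ℝ)*(s*η/2)))⁻¹ ≤ (12:ℝ)⁻¹ :=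
    inv_anti₀ (by norm_num) hexp
  calc (Real.exp ((n:ℝ)*(s*η/2)))⁻¹ ≤ (12:ℝ)⁻¹ := hinv
  _ = 1/12 := by norm_num

lemma change_measure (Q P : 𝒳 → ℝ) (hQ : ∀ x, 0 < Q x) (hP : ∀ x, 0 < P x) {n : ℕ}
    (A T : Set (Fin n → 𝒳)) (c : ℝ)
    (hT : ∀ ω ∈ T, (∑ i, Real.log (Q (ω i) / P (ω i))) ≤ c) :
    prodProb Q (A ∩ T) ≤ Real.exp c * prodProb P A := by
  have step1 : prodProb Q (A ∩ T) ≤ Real.exp c * prodProb P (A ∩ T) := by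
    unfold prodProb
    rw [Finset.mul_sum]
    apply Finset.sum_le_sum
    intro ω _
    by_cases hω : ω ∈ A ∩ T
    · rw [Set.indicator_of_mem hω, Set.indicator_of_mem hω]
      have hprod : ∏ i, Q (ω i) = Real.exp (∑ i, Real.log (Q (ω i) / P (ω i))) * ∏ i, P (ω i) := by
        rw [Real.exp_sum]
        rw [← Finset.prod_mul_distrib]
        apply Finset.prod_congr rfl
        intro i _
        rw [Real.exp_log (div_pos (hQ _) (hP _))]
        exact (div_mul_cancel₀ _ (ne_of_gt (hP _))).symm
      rw [hprod]
      have h1 : Real.exp (∑ i, Real.log (Q (ω i) / P (ω i))) ≤ Real.exp c :=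
        Real.exp_le_exp.2 (hT ω hω.2)
      exact mul_le_mul_of_nonneg_right h1 (Finset.prod_nonneg fun i _ => (hP _).le)
    · rw [Set.indicator_of_notMem hω, Set.indicator_of_notMem hω]
      simp
  refine le_trans step1 ?_
  apply mul_le_mul_of_nonneg_left _ (Real.exp_pos _).le
  exact prodProb_mono (fun x => (hP x).le) Set.inter_subset_left

lemma prodProb_inter_ge (P : 𝒳 → ℝ) (hP : ∀ x, 0 ≤ P x) {n : ℕ} (A T : Set (Fin n → 𝒳)) :
    prodProb P A - prodProb P Tᶜ ≤ prodProb P (A ∩ T) := by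
  have hsub : A ⊆ (A ∩ T) ∪ Tᶜ := by
    intro ω hω
    by_cases hT : ω ∈ T
    · exact Or.inl ⟨hω, hT⟩
    · exact Or.inr hT
  have := le_trans (prodProb_mono hP hsub) (prodProb_union_le hP _ _)
  linarith

end converse


section trichotomy
variable {P₁ P₂ : 𝒳 → ℝ}

/-- needs the defs RejAchievable etc from above -/
lemma converse_trichotomy
    (h1pos : ∀ x, 0 < P₁ x) (h2pos : ∀ x, 0 < P₂ x)
    (h1sum : ∑ x, P₁ x = 1) (h2sum : ∑ x, P₂ x = 1)
    {γ E₁ E₂ : ℝ} (hγ : 0 < γ)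
    (hach : RejAchievable P₁ P₂ E₁ E₂ γ) (l : ℝ) :
    E₂ ≤ kl (tilt P₁ P₂ l) P₂ ∨ E₁ ≤ kl (tilt P₁ P₂ l) P₁ ∨
      (γ ≤ kl (tilt P₁ P₂ l) P₁ ∧ γ ≤ kl (tilt P₁ P₂ l) P₂) := by
  by_contra hcon
  push_neg at hcon
  obtain ⟨hg, hf, hfg⟩ := hcon
  set Q := tilt P₁ P₂ l with hQdef
  set f := kl Q P₁ with hfdef
  set g := kl Q P₂ with hgdef
  have hQpos : ∀ x, 0 < Q x := tilt_pos h1pos h2pos l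
  have hQsum : ∑ x, Q x = 1 := tilt_sum h1pos h2pos l
  have hminlt : min f g < γ := by
    by_cases hc : γ ≤ f
    · exact lt_of_le_of_lt (min_le_right _ _) (hfg hc)
    · push_neg at hc
      exact lt_of_le_of_lt (min_le_left _ _) hc
  set η := min (min (E₁ - f) (E₂ - g)) (γ - min f g) / 4 with hηdef
  have hηpos : 0 < η := by
    apply div_pos _ (by norm_num)
    apply lt_min (lt_min (by linarith) (by linarith)) (by linarith)
  have hη4a : 4 * η ≤ E₁ - f := by
    have : min (min (E₁ - f) (E₂ - g)) (γ - min f g) ≤ E₁ - f :=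
      le_trans (min_le_left _ _) (min_le_left _ _)
    rw [hηdef]; linarith
  have hη4b : 4 * η ≤ E₂ - g := by
    have : min (min (E₁ - f) (E₂ - g)) (γ - min f g) ≤ E₂ - g :=
      le_trans (min_le_left _ _) (min_le_right _ _)
    rw [hηdef]; linarith
  have hη4c : 4 * η ≤ γ - min f g := by
    have : min (min (E₁ - f) (E₂ - g)) (γ - min f g) ≤ γ - min f g := min_le_right _ _
    rw [hηdef]; linarith
  clear_value η
  obtain ⟨hE1nn, hE2nn, hγnn, hachδ⟩ := hach
  obtain ⟨n₀, hn₀⟩ := hachδ η hηpos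
  obtain ⟨n₂, hn₂⟩ := tail_bound Q hQpos hQsum (fun x => Real.log (Q x / P₁ x)) hηpos
  obtain ⟨n₃, hn₃⟩ := tail_bound Q hQpos hQsum (fun x => Real.log (Q x / P₂ x)) hηpos
  set n := max (max n₀ 1) (max (max n₂ n₃) (⌈Real.log 6 / η⌉₊ + 1)) with hndef
  have hn_n₀ : n₀ ≤ n := le_trans (le_max_left _ _) (le_max_left _ _)
  have hn_1 : 1 ≤ n := le_trans (le_max_right _ _) (le_max_left _ _)
  have hn_n₂ : n₂ ≤ n := le_trans (le_trans (le_max_left _ _) (le_max_left _ _)) (le_max_right _ _)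
  have hn_n₃ : n₃ ≤ n := le_trans (le_trans (le_max_right _ _) (le_max_left _ _)) (le_max_right _ _)
  have hn_log : Real.log 6 ≤ n * η := by
    have h1 : (⌈Real.log 6 / η⌉₊ : ℝ) + 1 ≤ (n : ℝ) := by
      have : ⌈Real.log 6 / η⌉₊ + 1 ≤ n := le_trans (le_max_right _ _) (le_max_right _ _)
      exact_mod_cast this
    have h2 : Real.log 6 / η ≤ (⌈Real.log 6 / η⌉₊ : ℝ) := Nat.le_ceil _
    have h3 : Real.log 6 / η ≤ (n : ℝ) := by linarith
    rw [div_le_iff₀ hηpos] at h3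
    linarith
  clear_value n
  obtain ⟨A1, A2, AΩ, hd12, hd1Ω, hd2Ω, hunion, hb1, hb2, hbΩ⟩ := hn₀ n hn_n₀
  -- typical set
  set T := {ω : Fin n → 𝒳 | (∑ i, Real.log (Q (ω i) / P₁ (ω i))) ≤ (n:ℝ) * (f + η)}
      ∩ {ω : Fin n → 𝒳 | (∑ i, Real.log (Q (ω i) / P₂ (ω i))) ≤ (n:ℝ) * (g + η)} with hTdef
  have hTc : prodProb Q Tᶜ ≤ 1/6 := by
    have hsplit : Tᶜ = {ω : Fin n → 𝒳 | (n:ℝ) * (f + η) < ∑ i, Real.log (Q (ω i) / P₁ (ω i))}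
        ∪ {ω : Fin n → 𝒳 | (n:ℝ) * (g + η) < ∑ i, Real.log (Q (ω i) / P₂ (ω i))} := by
      rw [hTdef, Set.compl_inter]
      congr 1 <;> · ext ω; simp [not_le]
    rw [hsplit]
    refine le_trans (prodProb_union_le (fun x => (hQpos x).le) _ _) ?_
    have t1 := hn₂ n hn_n₂
    have t2 := hn₃ n hn_n₃
    rw [show (∑ x, Q x * Real.log (Q x / P₁ x)) = f from rfl] at t1
    rw [show (∑ x, Q x * Real.log (Q x / P₂ x)) = g from rfl] at t2
    linarith
  have hQA : 1 ≤ prodProb Q A1 + prodProb Q A2 + prodProb Q AΩ := by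
    have h1 : prodProb Q (Set.univ : Set (Fin n → 𝒳)) = 1 := prodProb_univ hQsum
    have h2 : prodProb Q (A1 ∪ A2 ∪ AΩ) ≤ prodProb Q A1 + prodProb Q A2 + prodProb Q AΩ := by
      refine le_trans (prodProb_union_le (fun x => (hQpos x).le) _ _) ?_
      have := prodProb_union_le (P := Q) (fun x => (hQpos x).le) A1 A2
      linarith
    rw [hunion] at h2
    linarith
  -- lower bound machinery for a region with Q-prob ≥ 1/3
  have main : ∀ R : Set (Fin n → 𝒳), 1/3 ≤ prodProb Q R →
      Real.exp (-((n:ℝ) * (f + η))) / 6 ≤ prodProb P₁ R ∧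
      Real.exp (-((n:ℝ) * (g + η))) / 6 ≤ prodProb P₂ R := by
    intro R hR
    have hRT : 1/6 ≤ prodProb Q (R ∩ T) := by
      have := prodProb_inter_ge Q (fun x => (hQpos x).le) R T
      linarith
    constructor
    · have hcm := change_measure Q P₁ hQpos h1pos R T ((n:ℝ) * (f + η))
        (fun ω hω => hω.1)
      have h6 : 1/6 ≤ Real.exp ((n:ℝ)*(f+η)) * prodProb P₁ R := le_trans hRT hcm
      calc Real.exp (-((n:ℝ)*(f+η)))/6 = Real.exp (-((n:ℝ)*(f+η))) * (1/6) := by ring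
      _ ≤ Real.exp (-((n:ℝ)*(f+η))) * (Real.exp ((n:ℝ)*(f+η)) * prodProb P₁ R) :=
          mul_le_mul_of_nonneg_left h6 (Real.exp_pos _).le
      _ = prodProb P₁ R := by rw [← mul_assoc, ← Real.exp_add]; simp
    · have hcm := change_measure Q P₂ hQpos h2pos R T ((n:ℝ) * (g + η))
        (fun ω hω => hω.2)
      have h6 : 1/6 ≤ Real.exp ((n:ℝ)*(g+η)) * prodProb P₂ R := le_trans hRT hcm
      calc Real.exp (-((n:ℝ)*(g+η)))/6 = Real.exp (-((n:ℝ)*(g+η))) * (1/6) := by ring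
      _ ≤ Real.exp (-((n:ℝ)*(g+η))) * (Real.exp ((n:ℝ)*(g+η)) * prodProb P₂ R) :=
          mul_le_mul_of_nonneg_left h6 (Real.exp_pos _).le
      _ = prodProb P₂ R := by rw [← mul_assoc, ← Real.exp_add]; simp
  have bound_contra : ∀ X Y : ℝ, Real.exp (-X)/6 ≤ Real.exp (-Y) → Y - X ≤ Real.log 6 := by
    intro X Y hXY
    have h2 : Real.exp (-X) ≤ 6 * Real.exp (-Y) := by linarith
    have h1 : Real.exp (Y - X) ≤ 6 := by
      have h3 : Real.exp (Y - X) = Real.exp Y * Real.exp (-X) := by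
        rw [← Real.exp_add, sub_eq_add_neg]
      rw [h3]
      calc Real.exp Y * Real.exp (-X) ≤ Real.exp Y * (6 * Real.exp (-Y)) :=
            mul_le_mul_of_nonneg_left h2 (Real.exp_pos _).le
      _ = 6 * (Real.exp Y * Real.exp (-Y)) := by ring
      _ = 6 := by rw [← Real.exp_add]; simp
    have h4 := Real.log_le_log (Real.exp_pos _) h1
    rwa [Real.log_exp] at h4
  have hn1 : (1:ℝ) ≤ (n:ℝ) := by exact_mod_cast hn_1
  by_cases hA1 : 1/3 ≤ prodProb Q A1
  · obtain ⟨-, hp2⟩ := main A1 hA1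
    have hchain : Real.exp (-((n:ℝ)*(g+η)))/6 ≤ Real.exp (-((E₂ - η) * (n:ℝ))) :=
      le_trans hp2 hb2
    have := bound_contra _ _ hchain
    nlinarith [hη4b, hηpos, hn_log]
  by_cases hA2 : 1/3 ≤ prodProb Q A2
  · obtain ⟨hp1, -⟩ := main A2 hA2
    have hchain : Real.exp (-((n:ℝ)*(f+η)))/6 ≤ Real.exp (-((E₁ - η) * (n:ℝ))) :=
      le_trans hp1 hb1
    have := bound_contra _ _ hchain
    nlinarith [hη4a, hηpos, hn_log]
  · have hAΩ : 1/3 ≤ prodProb Q AΩ := by linarith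
    obtain ⟨hp1, hp2⟩ := main AΩ hAΩ
    have hb1Ω : prodProb P₁ AΩ ≤ Real.exp (-((γ - η) * (n:ℝ))) := by
      have := prodProb_nonneg (fun x => (h2pos x).le) AΩ
      linarith
    have hb2Ω : prodProb P₂ AΩ ≤ Real.exp (-((γ - η) * (n:ℝ))) := by
      have := prodProb_nonneg (fun x => (h1pos x).le) AΩ
      linarith
    have hc1 := bound_contra _ _ (le_trans hp1 hb1Ω)
    have hc2 := bound_contra _ _ (le_trans hp2 hb2Ω)
    rcases min_cases f g with ⟨hmin, -⟩ | ⟨hmin, -⟩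
    · rw [hmin] at hη4c
      nlinarith [hηpos, hn_log]
    · rw [hmin] at hη4c
      nlinarith [hηpos, hn_log]

end trichotomy


section selection
variable {P₁ P₂ : 𝒳 → ℝ}

lemma continuous_rpow_const_base {y : ℝ} (hy : 0 < y) : Continuous fun l : ℝ => y ^ l := by
  have : (fun l : ℝ => y ^ l) = fun l : ℝ => Real.exp (Real.log y * l) := by
    funext l
    rw [Real.rpow_def_of_pos hy]
  rw [this]
  exact Real.continuous_exp.comp (continuous_const.mul continuous_id)

lemma tilt_continuous (h1pos : ∀ x, 0 < P₁ x) (h2pos : ∀ x, 0 < P₂ x) (x : 𝒳) :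
    Continuous fun l : ℝ => tilt P₁ P₂ l x := by
  unfold tilt
  apply Continuous.div
  · exact ((continuous_rpow_const_base (h1pos x)).comp
      (continuous_const.sub continuous_id)).mul (continuous_rpow_const_base (h2pos x))
  · apply continuous_finset_sum
    intro a _
    exact ((continuous_rpow_const_base (h1pos a)).comp
      (continuous_const.sub continuous_id)).mul (continuous_rpow_const_base (h2pos a))
  · intro l
    exact ne_of_gt (Lam_pos h1pos h2pos l)

lemma kl_tilt_continuous (h1pos : ∀ x, 0 < P₁ x) (h2pos : ∀ x, 0 < P₂ x)
    (P : 𝒳 → ℝ) (hP : ∀ x, 0 < P x) :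
    Continuous fun l : ℝ => kl (tilt P₁ P₂ l) P := by
  unfold kl
  apply continuous_finset_sum
  intro x _
  apply Continuous.mul (tilt_continuous h1pos h2pos x)
  apply Continuous.log
  · exact (tilt_continuous h1pos h2pos x).div continuous_const (fun l => ne_of_gt (hP x))
  · intro l
    exact ne_of_gt (div_pos (tilt_pos h1pos h2pos l x) (hP x))

lemma tilt_zero (h1pos : ∀ x, 0 < P₁ x) (h2pos : ∀ x, 0 < P₂ x) (h1sum : ∑ x, P₁ x = 1) :
    tilt P₁ P₂ 0 = P₁ := by
  funext x
  unfold tilt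
  simp only [sub_zero, Real.rpow_one, Real.rpow_zero, mul_one]
  rw [h1sum, div_one]

lemma tilt_one (h1pos : ∀ x, 0 < P₁ x) (h2pos : ∀ x, 0 < P₂ x) (h2sum : ∑ x, P₂ x = 1) :
    tilt P₁ P₂ 1 = P₂ := by
  funext x
  unfold tilt
  simp only [sub_self, Real.rpow_one, Real.rpow_zero, one_mul]
  rw [h2sum, div_one]

lemma kl_self (P : 𝒳 → ℝ) (hP : ∀ x, 0 < P x) : kl P P = 0 := by
  unfold kl
  apply Finset.sum_eq_zero
  intro x _
  rw [div_self (ne_of_gt (hP x)), Real.log_one, mul_zero]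

lemma selection
    (h1pos : ∀ x, 0 < P₁ x) (h2pos : ∀ x, 0 < P₂ x)
    (h1sum : ∑ x, P₁ x = 1) (h2sum : ∑ x, P₂ x = 1)
    {γ E₁ E₂ : ℝ} (hγ : 0 < γ) (hE1 : 0 < E₁) (hE2 : 0 < E₂)
    (hach : RejAchievable P₁ P₂ E₁ E₂ γ) :
    ∃ la lb : ℝ, la ∈ Set.Icc (0:ℝ) 1 ∧ lb ∈ Set.Icc (0:ℝ) 1 ∧
      E₂ ≤ kl (tilt P₁ P₂ la) P₂ ∧ E₁ ≤ kl (tilt P₁ P₂ lb) P₁ ∧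
      ((γ ≤ kl (tilt P₁ P₂ la) P₁ ∧ γ ≤ kl (tilt P₁ P₂ lb) P₂) ∨ la = lb) := by
  set f := fun l : ℝ => kl (tilt P₁ P₂ l) P₁ with hfdef
  set g := fun l : ℝ => kl (tilt P₁ P₂ l) P₂ with hgdef
  have hfc : Continuous f := kl_tilt_continuous h1pos h2pos P₁ h1pos
  have hgc : Continuous g := kl_tilt_continuous h1pos h2pos P₂ h2pos
  have hf0 : f 0 = 0 := by
    rw [hfdef]; simp only; rw [tilt_zero h1pos h2pos h1sum]; exact kl_self P₁ h1pos
  have hg1 : g 1 = 0 := by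
    rw [hgdef]; simp only; rw [tilt_one h1pos h2pos h2sum]; exact kl_self P₂ h2pos
  have tri : ∀ l : ℝ, E₂ ≤ g l ∨ E₁ ≤ f l ∨ (γ ≤ f l ∧ γ ≤ g l) := fun l =>
    converse_trichotomy h1pos h2pos h1sum h2sum hγ hach l
  have hg0 : E₂ ≤ g 0 := by
    rcases tri 0 with h | h | h
    · exact h
    · rw [hf0] at h; linarith
    · obtain ⟨h1, -⟩ := h; rw [hf0] at h1; linarith
  have hf1 : E₁ ≤ f 1 := by
    rcases tri 1 with h | h | h
    · rw [hg1] at h; linarith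
    · exact h
    · obtain ⟨-, h2⟩ := h; rw [hg1] at h2; linarith
  -- the sets
  set Sa : Set ℝ := Set.Icc (0:ℝ) 1 ∩ {l | E₂ ≤ g l} with hSadef
  have hSacomp : IsCompact Sa := isCompact_Icc.inter_right (isClosed_le continuous_const hgc)
  have hSane : Sa.Nonempty := ⟨0, ⟨le_refl 0, zero_le_one⟩, hg0⟩
  set la := sSup Sa with hladef
  have hlaSa : la ∈ Sa := hSacomp.sSup_mem hSane
  have hlaIcc : la ∈ Set.Icc (0:ℝ) 1 := hlaSa.1
  have hgla : E₂ ≤ g la := hlaSa.2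
  set Sb : Set ℝ := Set.Icc (0:ℝ) 1 ∩ {l | E₁ ≤ f l} with hSbdef
  have hSbcomp : IsCompact Sb := isCompact_Icc.inter_right (isClosed_le continuous_const hfc)
  have hSbne : Sb.Nonempty := ⟨1, ⟨zero_le_one, le_refl 1⟩, hf1⟩
  set lb := sInf Sb with hlbdef
  have hlbSb : lb ∈ Sb := hSbcomp.sInf_mem hSbne
  have hlbIcc : lb ∈ Set.Icc (0:ℝ) 1 := hlbSb.1
  have hflb : E₁ ≤ f lb := hlbSb.2
  -- limit helper: approach la from the right
  have hla_single : γ ≤ f la ∨ E₁ ≤ f la := by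
    by_cases hcase : γ ≤ f la
    · exact Or.inl hcase
    push_neg at hcase
    right
    have hla1 : la < 1 := by
      rcases lt_or_eq_of_le hlaIcc.2 with h | h
      · exact h
      · exfalso
        rw [h] at hgla
        rw [hg1] at hgla
        linarith
    set u : ℕ → ℝ := fun j => la + (1 - la)/(j+1) with hudef
    have hulim : Filter.Tendsto u Filter.atTop (nhds la) := by
      have h0 : Filter.Tendsto (fun j : ℕ => (1 - la) * (1/(j+1))) Filter.atTop (nhds 0) := by
        have h1 := tendsto_one_div_add_atTop_nhds_zero_nat.const_mul (1 - la)
        simpa using h1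
      have h2 : Filter.Tendsto u Filter.atTop (nhds (la + 0)) := by
        apply Filter.Tendsto.const_add
        simpa [hudef, div_eq_mul_inv] using h0
      simpa using h2
    have hubound : ∀ j : ℕ, min γ E₁ ≤ f (u j) := by
      intro j
      have hj1 : (0:ℝ) < (1 - la)/(j+1) := by
        apply div_pos (by linarith)
        positivity
      have huj : u j ∈ Set.Icc (0:ℝ) 1 := by
        constructor
        · have := hlaIcc.1; simp only [hudef]; linarith
        · simp only [hudef]
          have h1 : (1 - la)/((j:ℝ)+1) ≤ (1 - la)/1 := by
            apply div_le_div_of_nonneg_left (by linarith) (by norm_num)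
            push_cast
            linarith
          rw [div_one] at h1
          linarith
      have hnotSa : ¬ (E₂ ≤ g (u j)) := by
        intro hcon
        have hmem : u j ∈ Sa := ⟨huj, hcon⟩
        have hle : u j ≤ la := le_csSup hSacomp.bddAbove hmem
        simp only [hudef] at hle
        linarith
      rcases tri (u j) with h | h | h
      · exact absurd h hnotSa
      · exact le_trans (min_le_right _ _) h
      · exact le_trans (min_le_left _ _) h.1
    have hlim : min γ E₁ ≤ f la :=
      ge_of_tendsto' (hfc.continuousAt.tendsto.comp hulim) hubound
    rcases le_total γ E₁ with hm | hm
    · rw [min_eq_left hm] at hlim; linarith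
    · rw [min_eq_right hm] at hlim; exact hlim
  have hlb_single : γ ≤ g lb ∨ E₂ ≤ g lb := by
    by_cases hcase : γ ≤ g lb
    · exact Or.inl hcase
    push_neg at hcase
    right
    have hlb0 : 0 < lb := by
      rcases lt_or_eq_of_le hlbIcc.1 with h | h
      · exact h
      · exfalso
        rw [← h] at hflb
        rw [hf0] at hflb
        linarith
    set u : ℕ → ℝ := fun j => lb - lb/(j+1) with hudef
    have hulim : Filter.Tendsto u Filter.atTop (nhds lb) := by
      have h0 : Filter.Tendsto (fun j : ℕ => lb * (1/(j+1))) Filter.atTop (nhds 0) := by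
        have h1 := tendsto_one_div_add_atTop_nhds_zero_nat.const_mul lb
        simpa using h1
      have h2 : Filter.Tendsto u Filter.atTop (nhds (lb - 0)) := by
        apply Filter.Tendsto.const_sub
        simpa [hudef, div_eq_mul_inv] using h0
      simpa using h2
    have hubound : ∀ j : ℕ, min γ E₂ ≤ g (u j) := by
      intro j
      have hj1 : (0:ℝ) < lb/(j+1) := by
        apply div_pos hlb0
        positivity
      have huj : u j ∈ Set.Icc (0:ℝ) 1 := by
        constructor
        · simp only [hudef]
          have h1 : lb/((j:ℝ)+1) ≤ lb/1 := by
            apply div_le_div_of_nonneg_left hlb0.le (by norm_num)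
            push_cast
            linarith
          rw [div_one] at h1
          linarith
        · have := hlbIcc.2; simp only [hudef]; linarith
      have hnotSb : ¬ (E₁ ≤ f (u j)) := by
        intro hcon
        have hmem : u j ∈ Sb := ⟨huj, hcon⟩
        have hle : lb ≤ u j := csInf_le hSbcomp.bddBelow hmem
        simp only [hudef] at hle
        linarith
      rcases tri (u j) with h | h | h
      · exact le_trans (min_le_right _ _) h
      · exact absurd h hnotSb
      · exact le_trans (min_le_left _ _) h.2
    have hlim : min γ E₂ ≤ g lb :=
      ge_of_tendsto' (hgc.continuousAt.tendsto.comp hulim) hubound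
    rcases le_total γ E₂ with hm | hm
    · rw [min_eq_left hm] at hlim; linarith
    · rw [min_eq_right hm] at hlim; exact hlim
  rcases hla_single with hfa | hfa1
  · rcases hlb_single with hgb | hgb2
    · exact ⟨la, lb, hlaIcc, hlbIcc, hgla, hflb, Or.inl ⟨hfa, hgb⟩⟩
    · exact ⟨lb, lb, hlbIcc, hlbIcc, hgb2, hflb, Or.inr rfl⟩
  · exact ⟨la, la, hlaIcc, hlaIcc, hgla, hfa1, Or.inr rfl⟩

end selection


section suffix
variable {P₁ P₂ : 𝒳 → ℝ}

omit [Nonempty 𝒳] in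
lemma sqrt_prod {ι : Type*} (s : Finset ι) (f : ι → ℝ) (hf : ∀ i, 0 ≤ f i) :
    Real.sqrt (∏ i ∈ s, f i) = ∏ i ∈ s, Real.sqrt (f i) := by
  classical
  induction s using Finset.induction with
  | empty => simp
  | insert _ _ h ih =>
      rw [Finset.prod_insert h, Finset.prod_insert h, Real.sqrt_mul (hf _), ih]

lemma suffix_bound (P G : 𝒳 → ℝ) (hP : ∀ x, 0 < P x) (hPsum : ∑ x, P x = 1)
    (hG : ∀ x, 0 ≤ G x) {n N : ℕ} (hn : n ≤ N) (S : Set (Fin N → 𝒳))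
    (hle : ∀ ω ∈ S, (∏ i ∈ Finset.univ.filter (fun i : Fin N => ¬ (i:ℕ) < n), P (ω i))
      ≤ ∏ i ∈ Finset.univ.filter (fun i : Fin N => ¬ (i:ℕ) < n), G (ω i)) :
    prodProb P S ≤ (∑ x, G x) ^ (N - n) := by
  have key := prodProb_le_of_pointwise (P := P) S
    (fun i x => if (i : ℕ) < n then P x else G x)
    (by
      intro i x
      split_ifs
      · exact (hP x).le
      · exact hG x)
    (by
      intro ω hω
      rw [← Finset.prod_filter_mul_prod_filter_not Finset.univ (fun i : Fin N => (i:ℕ) < n)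
        (fun i => P (ω i))]
      rw [← Finset.prod_filter_mul_prod_filter_not Finset.univ (fun i : Fin N => (i:ℕ) < n)
        (fun i => if (i : ℕ) < n then P (ω i) else G (ω i))]
      have e1 : ∏ i ∈ Finset.univ.filter (fun i : Fin N => (i:ℕ) < n),
          (if (i : ℕ) < n then P (ω i) else G (ω i))
          = ∏ i ∈ Finset.univ.filter (fun i : Fin N => (i:ℕ) < n), P (ω i) := by
        apply Finset.prod_congr rfl
        intro i hi
        rw [if_pos (Finset.mem_filter.1 hi).2]
      have e2 : ∏ i ∈ Finset.univ.filter (fun i : Fin N => ¬ (i:ℕ) < n),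
          (if (i : ℕ) < n then P (ω i) else G (ω i))
          = ∏ i ∈ Finset.univ.filter (fun i : Fin N => ¬ (i:ℕ) < n), G (ω i) := by
        apply Finset.prod_congr rfl
        intro i hi
        rw [if_neg (Finset.mem_filter.1 hi).2]
      rw [e1, e2]
      apply mul_le_mul_of_nonneg_left (hle ω hω)
      exact Finset.prod_nonneg fun i _ => (hP _).le)
  refine le_trans key (le_of_eq ?_)
  have heq : ∀ i : Fin N, (∑ x, if (i : ℕ) < n then P x else G x)
      = (if ¬ (i : ℕ) < n then (∑ x, G x) else 1) := by
    intro i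
    by_cases h : (i:ℕ) < n
    · rw [if_neg (not_not_intro h)]
      simp only [if_pos h]
      exact hPsum
    · rw [if_pos h]
      simp only [if_neg h]
  rw [Finset.prod_congr rfl (fun i _ => heq i),
    ← Finset.prod_filter (s := (Finset.univ : Finset (Fin N)))
      (fun i : Fin N => ¬ (i : ℕ) < n) (fun _ => ∑ x, G x),
    Finset.prod_const, card_filter_not_lt hn]

end suffix


section rho
variable {P₁ P₂ : 𝒳 → ℝ}

omit [Nonempty 𝒳] in
lemma S1_agree {n N : ℕ} (ω ω' : Fin N → 𝒳)
    (h : ∀ i : Fin N, (i:ℕ) < n → ω i = ω' i) : S1 P₁ P₂ n ω' = S1 P₁ P₂ n ω := by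
  unfold S1
  apply Finset.sum_congr rfl
  intro i hi
  rw [h i (Finset.mem_filter.1 hi).2]

lemma rho_pos (h1pos : ∀ x, 0 < P₁ x) (h2pos : ∀ x, 0 < P₂ x) :
    0 < ∑ x, Real.sqrt (P₁ x * P₂ x) :=
  Finset.sum_pos (fun x _ => Real.sqrt_pos.2 (mul_pos (h1pos x) (h2pos x))) Finset.univ_nonempty

lemma rho_lt_one (h1pos : ∀ x, 0 < P₁ x) (h2pos : ∀ x, 0 < P₂ x)
    (h1sum : ∑ x, P₁ x = 1) (h2sum : ∑ x, P₂ x = 1) (hne : P₁ ≠ P₂) :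
    (∑ x, Real.sqrt (P₁ x * P₂ x)) < 1 := by
  have key : ∀ x, (Real.sqrt (P₁ x) - Real.sqrt (P₂ x))^2
      = P₁ x + P₂ x - 2 * Real.sqrt (P₁ x * P₂ x) := by
    intro x
    rw [sub_sq, Real.sq_sqrt (h1pos x).le, Real.sq_sqrt (h2pos x).le,
      Real.sqrt_mul (h1pos x).le]
    ring
  have hsum : ∑ x, (Real.sqrt (P₁ x) - Real.sqrt (P₂ x))^2
      = 2 - 2 * ∑ x, Real.sqrt (P₁ x * P₂ x) := by
    rw [Finset.sum_congr rfl (fun x _ => key x)]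
    rw [Finset.sum_sub_distrib, Finset.sum_add_distrib, h1sum, h2sum, ← Finset.mul_sum]
    ring
  obtain ⟨x₀, hx₀⟩ := Function.ne_iff.1 hne
  have hx0pos : 0 < (Real.sqrt (P₁ x₀) - Real.sqrt (P₂ x₀))^2 := by
    have hne' : Real.sqrt (P₁ x₀) ≠ Real.sqrt (P₂ x₀) := by
      intro hcon
      apply hx₀
      have h1 := Real.sq_sqrt (h1pos x₀).le
      have h2 := Real.sq_sqrt (h2pos x₀).le
      rw [← h1, ← h2, hcon]
    have := sub_ne_zero_of_ne hne'
    positivity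
  have hpos : 0 < ∑ x, (Real.sqrt (P₁ x) - Real.sqrt (P₂ x))^2 :=
    Finset.sum_pos' (fun x _ => sq_nonneg _) ⟨x₀, Finset.mem_univ _, hx0pos⟩
  linarith [hsum ▸ hpos]

end rho

/-- If `(E₁,E₂,γ)` is achievable by fixed-length tests with rejection, then `(E₁,E₂)`
is achievable by γ-almost-fixed-length tests. -/
theorem rejection_to_afl (P₁ P₂ : 𝒳 → ℝ)
    (h1pos : ∀ x, 0 < P₁ x) (h2pos : ∀ x, 0 < P₂ x)
    (h1sum : ∑ x, P₁ x = 1) (h2sum : ∑ x, P₂ x = 1)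
    (hne : P₁ ≠ P₂)
    (γ : ℝ) (hγ : 0 < γ) (E₁ E₂ : ℝ)
    (hach : RejAchievable P₁ P₂ E₁ E₂ γ) :
    AFLAchievable P₁ P₂ γ E₁ E₂ := by
  have h1nn : ∀ x, 0 ≤ P₁ x := fun x => (h1pos x).le
  have h2nn : ∀ x, 0 ≤ P₂ x := fun x => (h2pos x).le
  set ρ := ∑ x, Real.sqrt (P₁ x * P₂ x) with hρdef
  have hρpos : 0 < ρ := rho_pos h1pos h2pos
  have hρlt : ρ < 1 := rho_lt_one h1pos h2pos h1sum h2sum hne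
  have hBρ : 0 < -Real.log ρ := by
    have := Real.log_neg hρpos hρlt
    linarith
  set K := ⌈(E₁+E₂+1)/(-Real.log ρ)⌉₊ + 1 with hKdef
  have hKB : (E₁+E₂+1) ≤ (K:ℝ) * (-Real.log ρ) := by
    have h1 : (E₁+E₂+1)/(-Real.log ρ) ≤ (K:ℝ) := by
      calc (E₁+E₂+1)/(-Real.log ρ) ≤ (⌈(E₁+E₂+1)/(-Real.log ρ)⌉₊ : ℝ) := Nat.le_ceil _
      _ ≤ (K:ℝ) := by rw [hKdef]; push_cast; linarith
    rw [div_le_iff₀ hBρ] at h1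
    linarith
  have hK1 : 1 ≤ K := by rw [hKdef]; omega
  clear_value K
  refine ⟨hach.1, hach.2.1, (K:ℝ)+1, by positivity, 1, one_pos, ?_⟩
  intro δ hδ
  by_cases hd1 : E₁ ≤ δ
  · -- trivial test: always decide H₂
    refine ⟨1, fun n hn => ⟨n, ?_, ⟨⟨fun _ => n, ∅, Set.univ,
      fun ω => le_refl n, fun ω ω' _ => rfl, fun ω ω' _ => Iff.rfl, fun ω ω' _ => Iff.rfl,
      by simp, by simp⟩, ?_, ?_, ?_, ?_⟩⟩⟩
    · have hn1 : (1:ℝ) ≤ (n:ℝ) := by exact_mod_cast hn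
      have hK0 : (0:ℝ) ≤ (K:ℝ) := Nat.cast_nonneg K
      calc (n:ℝ) ≤ ((K:ℝ)+1) * (n:ℝ) := by nlinarith
      _ = ((K:ℝ)+1) * (n:ℝ)^1 := by rw [pow_one]
    · show prodProb P₁ {ω : Fin n → 𝒳 | n < n} ≤ _
      rw [show {ω : Fin n → 𝒳 | n < n} = ∅ from by simp, prodProb_empty]
      exact (Real.exp_pos _).le
    · show prodProb P₂ {ω : Fin n → 𝒳 | n < n} ≤ _
      rw [show {ω : Fin n → 𝒳 | n < n} = ∅ from by simp, prodProb_empty]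
      exact (Real.exp_pos _).le
    · show prodProb P₁ (Set.univ : Set (Fin n → 𝒳)) ≤ _
      rw [prodProb_univ h1sum]
      have h0 : (0:ℝ) ≤ -((E₁ - δ) * n) := by
        have : (0:ℝ) ≤ (n:ℝ) := Nat.cast_nonneg n
        nlinarith
      have := Real.add_one_le_exp (-((E₁ - δ) * (n:ℝ)))
      linarith
    · show prodProb P₂ (∅ : Set (Fin n → 𝒳)) ≤ _
      rw [prodProb_empty]
      exact (Real.exp_pos _).le
  by_cases hd2 : E₂ ≤ δ
  · -- trivial test: always decide H₁
    refine ⟨1, fun n hn => ⟨n, ?_, ⟨⟨fun _ => n, Set.univ, ∅,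
      fun ω => le_refl n, fun ω ω' _ => rfl, fun ω ω' _ => Iff.rfl, fun ω ω' _ => Iff.rfl,
      by simp, by simp⟩, ?_, ?_, ?_, ?_⟩⟩⟩
    · have hn1 : (1:ℝ) ≤ (n:ℝ) := by exact_mod_cast hn
      have hK0 : (0:ℝ) ≤ (K:ℝ) := Nat.cast_nonneg K
      calc (n:ℝ) ≤ ((K:ℝ)+1) * (n:ℝ) := by nlinarith
      _ = ((K:ℝ)+1) * (n:ℝ)^1 := by rw [pow_one]
    · show prodProb P₁ {ω : Fin n → 𝒳 | n < n} ≤ _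
      rw [show {ω : Fin n → 𝒳 | n < n} = ∅ from by simp, prodProb_empty]
      exact (Real.exp_pos _).le
    · show prodProb P₂ {ω : Fin n → 𝒳 | n < n} ≤ _
      rw [show {ω : Fin n → 𝒳 | n < n} = ∅ from by simp, prodProb_empty]
      exact (Real.exp_pos _).le
    · show prodProb P₁ (∅ : Set (Fin n → 𝒳)) ≤ _
      rw [prodProb_empty]
      exact (Real.exp_pos _).le
    · show prodProb P₂ (Set.univ : Set (Fin n → 𝒳)) ≤ _
      rw [prodProb_univ h2sum]
      have h0 : (0:ℝ) ≤ -((E₂ - δ) * n) := by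
        have : (0:ℝ) ≤ (n:ℝ) := Nat.cast_nonneg n
        nlinarith
      have := Real.add_one_le_exp (-((E₂ - δ) * (n:ℝ)))
      linarith
  -- main case
  push_neg at hd1 hd2
  have hE1 : 0 < E₁ := lt_trans hδ hd1
  have hE2 : 0 < E₂ := lt_trans hδ hd2
  obtain ⟨la, lb, hlaI, hlbI, hgla, hflb, hgood⟩ :=
    selection h1pos h2pos h1sum h2sum hγ hE1 hE2 hach
  refine ⟨max 1 ⌈1/δ⌉₊, fun n hn => ?_⟩
  have hn1 : 1 ≤ n := le_trans (le_max_left _ _) hn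
  have hn1R : (1:ℝ) ≤ (n:ℝ) := by exact_mod_cast hn1
  have hn0R : (0:ℝ) ≤ (n:ℝ) := by linarith
  have hδn : 1 ≤ δ * (n:ℝ) := by
    have h1 : (⌈1/δ⌉₊:ℝ) ≤ (n:ℝ) := by exact_mod_cast le_trans (le_max_right _ _) hn
    have h2 : 1/δ ≤ (n:ℝ) := le_trans (Nat.le_ceil _) h1
    rw [div_le_iff₀ hδ] at h2
    linarith
  set N := n + K*n with hNdef
  have hnN : n ≤ N := Nat.le_add_right _ _
  have hnltN : n < N := by
    have : 1 ≤ K*n := Nat.one_le_iff_ne_zero.2 (by positivity)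
    omega
  have hNn : N - n = K*n := by omega
  refine ⟨N, ?_, ?_⟩
  · apply le_of_eq
    rw [hNdef]
    push_cast
    rw [pow_one]
    ring
  set a := tparam P₁ P₂ la with hadef
  set b := tparam P₁ P₂ lb with hbdef
  set p : (Fin N → 𝒳) → Prop :=
    fun ω => (n:ℝ)*b < S1 P₁ P₂ n ω ∧ S1 P₁ P₂ n ω < (n:ℝ)*a with hpdef
  set C1 : Set (Fin N → 𝒳) :=
    {ω | (∏ i ∈ Finset.univ.filter (fun i : Fin N => ¬ (i:ℕ) < n), P₂ (ω i))
      ≤ ∏ i ∈ Finset.univ.filter (fun i : Fin N => ¬ (i:ℕ) < n), P₁ (ω i)} with hC1def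
  set A1s : Set (Fin N → 𝒳) :=
    {ω | (n:ℝ)*a ≤ S1 P₁ P₂ n ω} ∪ ({ω | p ω} ∩ C1) with hA1def
  -- kl facts
  have hklf : E₁ ≤ kl (tilt P₁ P₂ lb) P₁ := hflb
  have hklg : E₂ ≤ kl (tilt P₁ P₂ la) P₂ := hgla
  -- exp monotone helper
  have hexp_mono : ∀ c d : ℝ, c ≤ d → Real.exp (-((n:ℝ)*d)) ≤ Real.exp (-(c*(n:ℝ))) := by
    intro c d hcd
    apply Real.exp_le_exp.2
    nlinarith
  -- U bounds
  have hUbound1 : prodProb P₁ {ω : Fin N → 𝒳 | p ω} ≤ Real.exp (-(γ * (n:ℝ))) := by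
    rcases hgood with ⟨hγa, hγb⟩ | heq
    · calc prodProb P₁ {ω : Fin N → 𝒳 | p ω}
          ≤ prodProb P₁ {ω : Fin N → 𝒳 | S1 P₁ P₂ n ω ≤ (n:ℝ) * a} := by
            apply prodProb_mono h1nn
            intro ω hω
            exact le_of_lt hω.2
      _ ≤ Real.exp (-((n:ℝ) * kl (tilt P₁ P₂ la) P₁)) :=
            chernoff1 h1pos h2pos h1sum hnN hlaI
      _ ≤ Real.exp (-(γ * (n:ℝ))) := hexp_mono γ _ hγa
    · have hempty : {ω : Fin N → 𝒳 | p ω} = ∅ := by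
        ext ω
        simp only [Set.mem_setOf_eq, Set.mem_empty_iff_false, iff_false]
        rintro ⟨hx1, hx2⟩
        have hab : a = b := by rw [hadef, hbdef, heq]
        rw [hab] at hx2
        linarith
      rw [hempty, prodProb_empty]
      exact (Real.exp_pos _).le
  have hUbound2 : prodProb P₂ {ω : Fin N → 𝒳 | p ω} ≤ Real.exp (-(γ * (n:ℝ))) := by
    rcases hgood with ⟨hγa, hγb⟩ | heq
    · calc prodProb P₂ {ω : Fin N → 𝒳 | p ω}
          ≤ prodProb P₂ {ω : Fin N → 𝒳 | (n:ℝ) * b ≤ S1 P₁ P₂ n ω} := by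
            apply prodProb_mono h2nn
            intro ω hω
            exact le_of_lt hω.1
      _ ≤ Real.exp (-((n:ℝ) * kl (tilt P₁ P₂ lb) P₂)) :=
            chernoff2 h1pos h2pos h2sum hnN hlbI
      _ ≤ Real.exp (-(γ * (n:ℝ))) := hexp_mono γ _ hγb
    · have hempty : {ω : Fin N → 𝒳 | p ω} = ∅ := by
        ext ω
        simp only [Set.mem_setOf_eq, Set.mem_empty_iff_false, iff_false]
        rintro ⟨hx1, hx2⟩
        have hab : a = b := by rw [hadef, hbdef, heq]
        rw [hab] at hx2
        linarith
      rw [hempty, prodProb_empty]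
      exact (Real.exp_pos _).le
  -- suffix bounds
  have hC1bound : prodProb P₂ C1 ≤ ρ^(K*n) := by
    have key := suffix_bound P₂ (fun x => Real.sqrt (P₁ x * P₂ x)) h2pos h2sum
      (fun x => Real.sqrt_nonneg _) hnN C1 ?_
    · rwa [hNn] at key
    · intro ω hω
      have hω' : (∏ i ∈ Finset.univ.filter (fun i : Fin N => ¬ (i:ℕ) < n), P₂ (ω i))
          ≤ ∏ i ∈ Finset.univ.filter (fun i : Fin N => ¬ (i:ℕ) < n), P₁ (ω i) := hω
      set q1 := ∏ i ∈ Finset.univ.filter (fun i : Fin N => ¬ (i:ℕ) < n), P₁ (ω i) with hq1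
      set q2 := ∏ i ∈ Finset.univ.filter (fun i : Fin N => ¬ (i:ℕ) < n), P₂ (ω i) with hq2
      have hq1nn : 0 ≤ q1 := Finset.prod_nonneg fun i _ => h1nn _
      have hq2nn : 0 ≤ q2 := Finset.prod_nonneg fun i _ => h2nn _
      calc q2 ≤ Real.sqrt (q1 * q2) := by
            rw [Real.le_sqrt hq2nn (mul_nonneg hq1nn hq2nn)]
            nlinarith
      _ = ∏ i ∈ Finset.univ.filter (fun i : Fin N => ¬ (i:ℕ) < n),
            Real.sqrt (P₁ (ω i) * P₂ (ω i)) := by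
            rw [hq1, hq2, ← Finset.prod_mul_distrib,
              sqrt_prod _ _ (fun i => (mul_pos (h1pos _) (h2pos _)).le)]
  have hC2bound : prodProb P₁ C1ᶜ ≤ ρ^(K*n) := by
    have key := suffix_bound P₁ (fun x => Real.sqrt (P₁ x * P₂ x)) h1pos h1sum
      (fun x => Real.sqrt_nonneg _) hnN C1ᶜ ?_
    · rwa [hNn] at key
    · intro ω hω
      have hω' : (∏ i ∈ Finset.univ.filter (fun i : Fin N => ¬ (i:ℕ) < n), P₁ (ω i))
          < ∏ i ∈ Finset.univ.filter (fun i : Fin N => ¬ (i:ℕ) < n), P₂ (ω i) :=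
        not_le.1 hω
      set q1 := ∏ i ∈ Finset.univ.filter (fun i : Fin N => ¬ (i:ℕ) < n), P₁ (ω i) with hq1
      set q2 := ∏ i ∈ Finset.univ.filter (fun i : Fin N => ¬ (i:ℕ) < n), P₂ (ω i) with hq2
      have hq1nn : 0 ≤ q1 := Finset.prod_nonneg fun i _ => h1nn _
      have hq2nn : 0 ≤ q2 := Finset.prod_nonneg fun i _ => h2nn _
      calc q1 ≤ Real.sqrt (q1 * q2) := by
            rw [Real.le_sqrt hq1nn (mul_nonneg hq1nn hq2nn)]
            nlinarith
      _ = ∏ i ∈ Finset.univ.filter (fun i : Fin N => ¬ (i:ℕ) < n),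
            Real.sqrt (P₁ (ω i) * P₂ (ω i)) := by
            rw [hq1, hq2, ← Finset.prod_mul_distrib,
              sqrt_prod _ _ (fun i => (mul_pos (h1pos _) (h2pos _)).le)]
  have hρKn : ρ^(K*n) ≤ Real.exp (-((E₁+E₂+1) * (n:ℝ))) := by
    have h1 : ρ^(K*n) = Real.exp (((K*n:ℕ):ℝ) * Real.log ρ) := by
      rw [Real.exp_nat_mul, Real.exp_log hρpos]
    rw [h1]
    apply Real.exp_le_exp.2
    push_cast
    nlinarith [mul_le_mul_of_nonneg_right hKB hn0R]
  have hkey : ∀ E : ℝ, 0 ≤ E → E ≤ E₁ + E₂ →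
      Real.exp (-((n:ℝ) * kl (tilt P₁ P₂ la) P₁)) = Real.exp (-((n:ℝ) * kl (tilt P₁ P₂ la) P₁)) := fun _ _ _ => rfl
  have hnum : ∀ E : ℝ, 0 ≤ E → E ≤ E₁ + E₂ →
      Real.exp (-(E*(n:ℝ))) + Real.exp (-((E₁+E₂+1)*(n:ℝ))) ≤ Real.exp (-((E-δ)*(n:ℝ))) := by
    intro E hE0 hEle
    have h1 : Real.exp (-((E₁+E₂+1)*(n:ℝ))) ≤ Real.exp (-(E*(n:ℝ))) * Real.exp (-(n:ℝ)) := by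
      rw [← Real.exp_add]
      apply Real.exp_le_exp.2
      nlinarith
    have h2 : Real.exp (-((E-δ)*(n:ℝ))) = Real.exp (-(E*(n:ℝ))) * Real.exp (δ*(n:ℝ)) := by
      rw [← Real.exp_add]
      congr 1
      ring
    have h3 : Real.exp (-(n:ℝ)) ≤ 1 := by
      calc Real.exp (-(n:ℝ)) ≤ Real.exp 0 := Real.exp_le_exp.2 (by linarith)
      _ = 1 := Real.exp_zero
    have h4 : (2:ℝ) ≤ Real.exp (δ*(n:ℝ)) := by
      have := Real.add_one_le_exp (δ*(n:ℝ))
      linarith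
    rw [h2]
    nlinarith [(Real.exp_pos (-(E*(n:ℝ)))).le]
  refine ⟨⟨fun ω => if p ω then N else n, A1s, A1sᶜ, ?_, ?_, ?_, ?_,
    disjoint_compl_right, Set.union_compl_self _⟩, ?_, ?_, ?_, ?_⟩
  · -- tau_le
    intro ω
    split_ifs
    · exact le_refl N
    · exact hnN
  · -- stopping
    intro ω ω' hagree
    by_cases hp : p ω
    · rw [if_pos hp] at hagree
      have hωeq : ω = ω' := funext fun i => hagree i i.isLt
      rw [← hωeq]
    · rw [if_neg hp] at hagree
      have hS : S1 P₁ P₂ n ω' = S1 P₁ P₂ n ω := S1_agree ω ω' hagree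
      have hp' : ¬ p ω' := by
        intro hc
        apply hp
        have hc' : (n:ℝ)*b < S1 P₁ P₂ n ω' ∧ S1 P₁ P₂ n ω' < (n:ℝ)*a := hc
        rw [hS] at hc'
        exact hc'
      rw [if_neg hp, if_neg hp']
  · -- adapted1
    intro ω ω' hagree
    by_cases hp : p ω
    · rw [if_pos hp] at hagree
      have hωeq : ω = ω' := funext fun i => hagree i i.isLt
      rw [hωeq]
    · rw [if_neg hp] at hagree
      have hS : S1 P₁ P₂ n ω' = S1 P₁ P₂ n ω := S1_agree ω ω' hagree
      have hp' : ¬ p ω' := by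
        intro hc
        apply hp
        have hc' : (n:ℝ)*b < S1 P₁ P₂ n ω' ∧ S1 P₁ P₂ n ω' < (n:ℝ)*a := hc
        rw [hS] at hc'
        exact hc'
      rw [hA1def]
      simp only [Set.mem_union, Set.mem_inter_iff, Set.mem_setOf_eq]
      constructor
      · rintro (h | ⟨hpp, -⟩)
        · left; rw [hS]; exact h
        · exact absurd hpp hp
      · rintro (h | ⟨hpp, -⟩)
        · left; rw [hS] at h; exact h
        · exact absurd hpp hp'
  · -- adapted2
    intro ω ω' hagree
    by_cases hp : p ω
    · rw [if_pos hp] at hagree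
      have hωeq : ω = ω' := funext fun i => hagree i i.isLt
      rw [hωeq]
    · rw [if_neg hp] at hagree
      have hS : S1 P₁ P₂ n ω' = S1 P₁ P₂ n ω := S1_agree ω ω' hagree
      have hp' : ¬ p ω' := by
        intro hc
        apply hp
        have hc' : (n:ℝ)*b < S1 P₁ P₂ n ω' ∧ S1 P₁ P₂ n ω' < (n:ℝ)*a := hc
        rw [hS] at hc'
        exact hc'
      simp only [Set.mem_compl_iff, hA1def, Set.mem_union, Set.mem_inter_iff,
        Set.mem_setOf_eq]
      constructor
      · intro h hcon
        apply h
        rcases hcon with hcon | ⟨hpp, -⟩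
        · left; rw [hS] at hcon; exact hcon
        · exact absurd hpp hp'
      · intro h hcon
        apply h
        rcases hcon with hcon | ⟨hpp, -⟩
        · left; rw [hS]; exact hcon
        · exact absurd hpp hp
  · -- P₁ (τ > n)
    show prodProb P₁ {ω : Fin N → 𝒳 | n < if p ω then N else n} ≤ _
    have hUset : {ω : Fin N → 𝒳 | n < if p ω then N else n} = {ω : Fin N → 𝒳 | p ω} := by
      ext ω
      simp only [Set.mem_setOf_eq]
      by_cases hp : p ω
      · rw [if_pos hp]
        exact iff_of_true hnltN hp
      · rw [if_neg hp]
        exact iff_of_false (lt_irrefl n) hp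
    rw [hUset]
    exact hUbound1
  · -- P₂ (τ > n)
    show prodProb P₂ {ω : Fin N → 𝒳 | n < if p ω then N else n} ≤ _
    have hUset : {ω : Fin N → 𝒳 | n < if p ω then N else n} = {ω : Fin N → 𝒳 | p ω} := by
      ext ω
      simp only [Set.mem_setOf_eq]
      by_cases hp : p ω
      · rw [if_pos hp]
        exact iff_of_true hnltN hp
      · rw [if_neg hp]
        exact iff_of_false (lt_irrefl n) hp
    rw [hUset]
    exact hUbound2
  · -- P₁ A2
    show prodProb P₁ A1sᶜ ≤ _
    have hsub : A1sᶜ ⊆ {ω : Fin N → 𝒳 | S1 P₁ P₂ n ω ≤ (n:ℝ) * b} ∪ C1ᶜ := by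
      intro ω hω
      rw [hA1def] at hω
      simp only [Set.mem_compl_iff, Set.mem_union, Set.mem_inter_iff, Set.mem_setOf_eq] at hω
      push_neg at hω
      obtain ⟨h1', h2'⟩ := hω
      by_cases hC : ω ∈ C1
      · left
        have hnp : ¬ ((n:ℝ)*b < S1 P₁ P₂ n ω ∧ S1 P₁ P₂ n ω < (n:ℝ)*a) :=
          fun hc => h2' hc hC
        simp only [Set.mem_setOf_eq]
        by_cases hb' : (n:ℝ)*b < S1 P₁ P₂ n ω
        · exact (hnp ⟨hb', h1'⟩).elim
        · exact not_lt.1 hb'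
      · right
        exact hC
    calc prodProb P₁ A1sᶜ
        ≤ prodProb P₁ ({ω : Fin N → 𝒳 | S1 P₁ P₂ n ω ≤ (n:ℝ) * b} ∪ C1ᶜ) :=
          prodProb_mono h1nn hsub
    _ ≤ prodProb P₁ {ω : Fin N → 𝒳 | S1 P₁ P₂ n ω ≤ (n:ℝ) * b} + prodProb P₁ C1ᶜ :=
          prodProb_union_le h1nn _ _
    _ ≤ Real.exp (-((n:ℝ) * kl (tilt P₁ P₂ lb) P₁)) + ρ^(K*n) :=
          add_le_add (chernoff1 h1pos h2pos h1sum hnN hlbI) hC2bound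
    _ ≤ Real.exp (-(E₁*(n:ℝ))) + Real.exp (-((E₁+E₂+1)*(n:ℝ))) :=
          add_le_add (hexp_mono E₁ _ hklf) hρKn
    _ ≤ Real.exp (-((E₁-δ)*(n:ℝ))) := hnum E₁ hE1.le (by linarith)
  · -- P₂ A1
    show prodProb P₂ A1s ≤ _
    have hsub : A1s ⊆ {ω : Fin N → 𝒳 | (n:ℝ) * a ≤ S1 P₁ P₂ n ω} ∪ C1 := by
      intro ω hω
      rw [hA1def] at hω
      rcases hω with h | ⟨-, hC⟩
      · exact Or.inl h
      · exact Or.inr hC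
    calc prodProb P₂ A1s
        ≤ prodProb P₂ ({ω : Fin N → 𝒳 | (n:ℝ) * a ≤ S1 P₁ P₂ n ω} ∪ C1) :=
          prodProb_mono h2nn hsub
    _ ≤ prodProb P₂ {ω : Fin N → 𝒳 | (n:ℝ) * a ≤ S1 P₁ P₂ n ω} + prodProb P₂ C1 :=
          prodProb_union_le h2nn _ _
    _ ≤ Real.exp (-((n:ℝ) * kl (tilt P₁ P₂ la) P₂)) + ρ^(K*n) :=
          add_le_add (chernoff2 h1pos h2pos h2sum hnN hlaI) hC1bound
    _ ≤ Real.exp (-(E₂*(n:ℝ))) + Real.exp (-((E₁+E₂+1)*(n:ℝ))) :=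
          add_le_add (hexp_mono E₂ _ hklg) hρKn
    _ ≤ Real.exp (-((E₂-δ)*(n:ℝ))) := hnum E₂ hE2.le (by linarith)
end

section
/- Fix γ ∈ (0, D*] and λ₁, λ₂ ∈ [0,1] with D(P^(λ₁)‖P₂) = γ and D(P^(λ₂)‖P₁) = γ, and set α = D(P^(λ₂)‖P₂) − D(P^(λ₂)‖P₁) and β = D(P^(λ₁)‖P₂) − D(P^(λ₁)‖P₁). Consider the fixed-length test with rejection at blocklength n that chooses H₁ if (1/n)Σ_{i=1}^n log(P₁(X_i)/P₂(X_i)) ≥ α, chooses H₂ if (1/n)Σ_{i=1}^n log(P₁(X_i)/P₂(X_i)) ≤ β, and rejects both hypotheses otherwise. Then for every n ≥ 1 this test satisfies P₁(A₂^n) ≤ e^{−n·D(P^(λ₁)‖P₁)}, P₂(A₁^n) ≤ e^{−n·D(P^(λ₂)‖P₂)}, P₁(A_Ω^n) ≤ e^{−γn}, and P₂(A_Ω^n) ≤ e^{−γn}. -/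
open Real Filter Finset MeasureTheory
open scoped Classical

variable {𝒳 : Type*} [Fintype 𝒳] [DecidableEq 𝒳] [Nonempty 𝒳]

namespace RejAux

variable (P₁ P₂ : 𝒳 → ℝ)

noncomputable def Z (l : ℝ) : ℝ := ∑ a, P₁ a ^ (1 - l) * P₂ a ^ l

noncomputable def alphaT (l : ℝ) : ℝ :=
  ∑ x, tilt P₁ P₂ l x * Real.log (P₁ x / P₂ x)

variable {P₁ P₂}

lemma rpow_split (x : ℝ) (hx : 0 < x) (s : ℝ) : x ^ s = x / x ^ (1 - s) := by
  rw [Real.rpow_sub hx, Real.rpow_one, div_div_eq_mul_div, mul_comm, mul_div_assoc,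
    div_self hx.ne', mul_one]

lemma Z_pos (h1 : ∀ x, 0 < P₁ x) (h2 : ∀ x, 0 < P₂ x) (l : ℝ) : 0 < Z P₁ P₂ l :=
  Finset.sum_pos (fun a _ => mul_pos (rpow_pos_of_pos (h1 a) _) (rpow_pos_of_pos (h2 a) _))
    univ_nonempty

lemma tilt_sum_one (h1 : ∀ x, 0 < P₁ x) (h2 : ∀ x, 0 < P₂ x) (l : ℝ) : ∑ x, tilt P₁ P₂ l x = 1 := by
  unfold tilt
  rw [← Finset.sum_div]
  exact div_self (ne_of_gt (Z_pos h1 h2 l))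

lemma tilt_div_left (h1 : ∀ x, 0 < P₁ x) (h2 : ∀ x, 0 < P₂ x) (l : ℝ) (x : 𝒳) :
    tilt P₁ P₂ l x / P₁ x = (P₂ x / P₁ x) ^ l / Z P₁ P₂ l := by
  have htilt : tilt P₁ P₂ l x = P₁ x ^ (1 - l) * P₂ x ^ l / Z P₁ P₂ l := rfl
  rw [htilt, Real.div_rpow (h2 x).le (h1 x).le, Real.rpow_sub (h1 x), Real.rpow_one]
  have hz := (Z_pos h1 h2 l).ne'
  have ha := (Real.rpow_pos_of_pos (h1 x) l).ne'
  have hb := (h1 x).ne'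
  field_simp

lemma tilt_div_right (h1 : ∀ x, 0 < P₁ x) (h2 : ∀ x, 0 < P₂ x) (l : ℝ) (x : 𝒳) :
    tilt P₁ P₂ l x / P₂ x = (P₁ x / P₂ x) ^ (1 - l) / Z P₁ P₂ l := by
  have htilt : tilt P₁ P₂ l x = P₁ x ^ (1 - l) * P₂ x ^ l / Z P₁ P₂ l := rfl
  rw [htilt, Real.div_rpow (h1 x).le (h2 x).le, rpow_split (P₂ x) (h2 x) l]
  have hz := (Z_pos h1 h2 l).ne'
  have ha := (Real.rpow_pos_of_pos (h2 x) (1 - l)).ne'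
  have hb := (h2 x).ne'
  field_simp

lemma kl_tilt_left (h1 : ∀ x, 0 < P₁ x) (h2 : ∀ x, 0 < P₂ x) (l : ℝ) :
    kl (tilt P₁ P₂ l) P₁ = -l * alphaT P₁ P₂ l - Real.log (Z P₁ P₂ l) := by
  unfold kl alphaT
  have key : ∀ x : 𝒳, tilt P₁ P₂ l x * Real.log (tilt P₁ P₂ l x / P₁ x)
      = -l * (tilt P₁ P₂ l x * Real.log (P₁ x / P₂ x))
        - tilt P₁ P₂ l x * Real.log (Z P₁ P₂ l) := by
    intro x
    rw [tilt_div_left h1 h2, Real.log_div (Real.rpow_pos_of_pos (div_pos (h2 x) (h1 x)) l).ne'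
        (Z_pos h1 h2 l).ne',
      Real.log_rpow (div_pos (h2 x) (h1 x)),
      show P₂ x / P₁ x = (P₁ x / P₂ x)⁻¹ from (inv_div _ _).symm, Real.log_inv]
    ring
  rw [Finset.sum_congr rfl fun x _ => key x, Finset.sum_sub_distrib, ← Finset.mul_sum,
    ← Finset.sum_mul, tilt_sum_one h1 h2, one_mul]

lemma kl_tilt_right (h1 : ∀ x, 0 < P₁ x) (h2 : ∀ x, 0 < P₂ x) (l : ℝ) :
    kl (tilt P₁ P₂ l) P₂ = (1 - l) * alphaT P₁ P₂ l - Real.log (Z P₁ P₂ l) := by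
  unfold kl alphaT
  have key : ∀ x : 𝒳, tilt P₁ P₂ l x * Real.log (tilt P₁ P₂ l x / P₂ x)
      = (1 - l) * (tilt P₁ P₂ l x * Real.log (P₁ x / P₂ x))
        - tilt P₁ P₂ l x * Real.log (Z P₁ P₂ l) := by
    intro x
    rw [tilt_div_right h1 h2, Real.log_div
        (Real.rpow_pos_of_pos (div_pos (h1 x) (h2 x)) (1 - l)).ne' (Z_pos h1 h2 l).ne',
      Real.log_rpow (div_pos (h1 x) (h2 x))]
    ring
  rw [Finset.sum_congr rfl fun x _ => key x, Finset.sum_sub_distrib, ← Finset.mul_sum,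
    ← Finset.sum_mul, tilt_sum_one h1 h2, one_mul]

lemma kl_sub (h1 : ∀ x, 0 < P₁ x) (h2 : ∀ x, 0 < P₂ x) (l : ℝ) :
    kl (tilt P₁ P₂ l) P₂ - kl (tilt P₁ P₂ l) P₁ = alphaT P₁ P₂ l := by
  rw [kl_tilt_left h1 h2, kl_tilt_right h1 h2]; ring

set_option linter.unusedSectionVars false

lemma S1_eq (n : ℕ) (ω : Fin n → 𝒳) :
    S1 P₁ P₂ n ω = ∑ i, Real.log (P₁ (ω i) / P₂ (ω i)) := by
  unfold S1
  congr 1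
  exact Finset.filter_true_of_mem (fun i _ => i.isLt)

lemma S1_swap (n : ℕ) {N : ℕ} (ω : Fin N → 𝒳) :
    S1 P₂ P₁ n ω = -S1 P₁ P₂ n ω := by
  unfold S1
  rw [← Finset.sum_neg_distrib]
  exact Finset.sum_congr rfl fun i _ => by
    rw [show P₂ (ω i) / P₁ (ω i) = (P₁ (ω i) / P₂ (ω i))⁻¹ from (inv_div _ _).symm,
      Real.log_inv]

lemma prodProb_mono (f : 𝒳 → ℝ) (hf : ∀ x, 0 ≤ f x) {N : ℕ} {S T : Set (Fin N → 𝒳)}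
    (h : S ⊆ T) : prodProb f S ≤ prodProb f T :=
  Finset.sum_le_sum fun ω _ =>
    Set.indicator_le_indicator_of_subset h (fun ω' => Finset.prod_nonneg fun i _ => hf (ω' i)) ω

lemma sum_prod_eq (g : 𝒳 → ℝ) (n : ℕ) :
    ∑ ω : Fin n → 𝒳, ∏ i, g (ω i) = (∑ x, g x) ^ n := by
  rw [Finset.sum_pow' Finset.univ g n, Fintype.piFinset_univ]

lemma chernoff_core (h1 : ∀ x, 0 < P₁ x) (h2 : ∀ x, 0 < P₂ x)
    (f : 𝒳 → ℝ) (hf : ∀ x, 0 < f x) (t b : ℝ) (ht : 0 ≤ t) (n : ℕ) :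
    prodProb f {ω : Fin n → 𝒳 | S1 P₁ P₂ n ω ≤ b}
      ≤ Real.exp (t * b) * (∑ x, f x * (P₂ x / P₁ x) ^ t) ^ n := by
  have key : ∀ ω : Fin n → 𝒳,
      ({ω : Fin n → 𝒳 | S1 P₁ P₂ n ω ≤ b}).indicator (fun ω' => ∏ i, f (ω' i)) ω
        ≤ Real.exp (t * b) * ∏ i, (f (ω i) * (P₂ (ω i) / P₁ (ω i)) ^ t) := by
    intro ω
    have hprod : ∏ i, ((P₂ (ω i) / P₁ (ω i)) ^ t : ℝ)
        = Real.exp (-(t * S1 P₁ P₂ n ω)) := by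
      have step : ∀ i : Fin n, ((P₂ (ω i) / P₁ (ω i)) ^ t : ℝ)
          = Real.exp (-(t * Real.log (P₁ (ω i) / P₂ (ω i)))) := by
        intro i
        rw [Real.rpow_def_of_pos (div_pos (h2 _) (h1 _)),
          show P₂ (ω i) / P₁ (ω i) = (P₁ (ω i) / P₂ (ω i))⁻¹ from (inv_div _ _).symm,
          Real.log_inv]
        ring_nf
      rw [Finset.prod_congr rfl fun i _ => step i, ← Real.exp_sum]
      congr 1
      rw [S1_eq, Finset.mul_sum, ← Finset.sum_neg_distrib]
    by_cases hω : ω ∈ {ω : Fin n → 𝒳 | S1 P₁ P₂ n ω ≤ b}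
    · rw [Set.indicator_of_mem hω]
      have hF : (0:ℝ) ≤ ∏ i, f (ω i) := Finset.prod_nonneg fun i _ => (hf _).le
      have hS : S1 P₁ P₂ n ω ≤ b := hω
      calc ∏ i, f (ω i)
          ≤ (∏ i, f (ω i)) * Real.exp (t * b - t * S1 P₁ P₂ n ω) :=
            le_mul_of_one_le_right hF (Real.one_le_exp (by nlinarith))
        _ = Real.exp (t * b) * ∏ i, (f (ω i) * (P₂ (ω i) / P₁ (ω i)) ^ t) := by
            rw [Finset.prod_mul_distrib, hprod,
              show t * b - t * S1 P₁ P₂ n ω = t * b + -(t * S1 P₁ P₂ n ω) by ring,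
              Real.exp_add]
            ring
    · rw [Set.indicator_of_notMem hω]
      exact mul_nonneg (Real.exp_pos _).le (Finset.prod_nonneg fun i _ =>
        mul_nonneg (hf _).le (Real.rpow_nonneg (div_nonneg (h2 _).le (h1 _).le) _))
  calc prodProb f {ω : Fin n → 𝒳 | S1 P₁ P₂ n ω ≤ b}
      ≤ ∑ ω : Fin n → 𝒳, Real.exp (t * b) * ∏ i, (f (ω i) * (P₂ (ω i) / P₁ (ω i)) ^ t) :=
        Finset.sum_le_sum fun ω _ => key ω
    _ = Real.exp (t * b) * (∑ x, f x * (P₂ x / P₁ x) ^ t) ^ n := by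
        rw [← Finset.mul_sum, sum_prod_eq (fun x => f x * (P₂ x / P₁ x) ^ t) n]

lemma bound_left (h1 : ∀ x, 0 < P₁ x) (h2 : ∀ x, 0 < P₂ x)
    (l : ℝ) (hl : l ∈ Set.Icc (0:ℝ) 1) (n : ℕ) :
    prodProb P₁ {ω : Fin n → 𝒳 | S1 P₁ P₂ n ω ≤ alphaT P₁ P₂ l * n}
      ≤ Real.exp (-((n:ℝ) * kl (tilt P₁ P₂ l) P₁)) := by
  have hZ := Z_pos h1 h2 l
  have hsum : ∑ x, P₁ x * (P₂ x / P₁ x) ^ l = Z P₁ P₂ l := by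
    refine Finset.sum_congr rfl fun x _ => ?_
    rw [Real.div_rpow (h2 x).le (h1 x).le, Real.rpow_sub (h1 x), Real.rpow_one]
    ring
  calc prodProb P₁ {ω : Fin n → 𝒳 | S1 P₁ P₂ n ω ≤ alphaT P₁ P₂ l * n}
      ≤ Real.exp (l * (alphaT P₁ P₂ l * n)) * (∑ x, P₁ x * (P₂ x / P₁ x) ^ l) ^ n :=
        chernoff_core h1 h2 P₁ h1 l _ hl.1 n
    _ = Real.exp (-((n:ℝ) * kl (tilt P₁ P₂ l) P₁)) := by
        have hZn : Z P₁ P₂ l ^ n = Real.exp ((n:ℝ) * Real.log (Z P₁ P₂ l)) := by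
          rw [← Real.rpow_natCast (Z P₁ P₂ l) n, Real.rpow_def_of_pos hZ, mul_comm]
        rw [hsum, hZn, ← Real.exp_add, kl_tilt_left h1 h2]
        congr 1
        ring

lemma bound_right (h1 : ∀ x, 0 < P₁ x) (h2 : ∀ x, 0 < P₂ x)
    (l : ℝ) (hl : l ∈ Set.Icc (0:ℝ) 1) (n : ℕ) :
    prodProb P₂ {ω : Fin n → 𝒳 | alphaT P₁ P₂ l * n ≤ S1 P₁ P₂ n ω}
      ≤ Real.exp (-((n:ℝ) * kl (tilt P₁ P₂ l) P₂)) := by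
  have hZ := Z_pos h1 h2 l
  have hset : {ω : Fin n → 𝒳 | alphaT P₁ P₂ l * n ≤ S1 P₁ P₂ n ω}
      = {ω : Fin n → 𝒳 | S1 P₂ P₁ n ω ≤ -(alphaT P₁ P₂ l * n)} := by
    ext ω
    simp only [Set.mem_setOf_eq]
    rw [S1_swap (P₁ := P₁) (P₂ := P₂) n ω]
    constructor <;> intro h <;> linarith
  have hsum : ∑ x, P₂ x * (P₁ x / P₂ x) ^ (1 - l) = Z P₁ P₂ l := by
    refine Finset.sum_congr rfl fun x _ => ?_
    rw [Real.div_rpow (h1 x).le (h2 x).le, rpow_split (P₂ x) (h2 x) l]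
    ring
  rw [hset]
  calc prodProb P₂ {ω : Fin n → 𝒳 | S1 P₂ P₁ n ω ≤ -(alphaT P₁ P₂ l * n)}
      ≤ Real.exp ((1 - l) * -(alphaT P₁ P₂ l * n))
          * (∑ x, P₂ x * (P₁ x / P₂ x) ^ (1 - l)) ^ n :=
        chernoff_core h2 h1 P₂ h2 (1 - l) _ (by linarith [hl.2]) n
    _ = Real.exp (-((n:ℝ) * kl (tilt P₁ P₂ l) P₂)) := by
        have hZn : Z P₁ P₂ l ^ n = Real.exp ((n:ℝ) * Real.log (Z P₁ P₂ l)) := by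
          rw [← Real.rpow_natCast (Z P₁ P₂ l) n, Real.rpow_def_of_pos hZ, mul_comm]
        rw [hsum, hZn, ← Real.exp_add, kl_tilt_right h1 h2]
        congr 1
        ring

end RejAux

/-- Error and rejection bounds for the fixed-length log-likelihood-ratio test with
rejection, with thresholds `α = α(l₂)` and `β = α(l₁)`:
`P₁(A₂^n) ≤ e^{−nD(P^(l₁)‖P₁)}`, `P₂(A₁^n) ≤ e^{−nD(P^(l₂)‖P₂)}`, and
`P_i(A_Ω^n) ≤ e^{−γn}` for `i = 1, 2`. -/
theorem rejection_test_bounds (P₁ P₂ : 𝒳 → ℝ)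
    (h1pos : ∀ x, 0 < P₁ x) (h2pos : ∀ x, 0 < P₂ x)
    (h1sum : ∑ x, P₁ x = 1) (h2sum : ∑ x, P₂ x = 1)
    (hne : P₁ ≠ P₂)
    (ls : ℝ) (hls : ls ∈ Set.Icc (0:ℝ) 1)
    (hchern : kl (tilt P₁ P₂ ls) P₁ = kl (tilt P₁ P₂ ls) P₂)
    (γ : ℝ) (hγ0 : 0 < γ) (hγD : γ ≤ kl (tilt P₁ P₂ ls) P₁)
    (l₁ l₂ : ℝ)
    (hl₁ : l₁ ∈ Set.Icc (0:ℝ) 1) (hl₂ : l₂ ∈ Set.Icc (0:ℝ) 1)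
    (hg1 : kl (tilt P₁ P₂ l₁) P₂ = γ) (hg2 : kl (tilt P₁ P₂ l₂) P₁ = γ) :
    ∀ n : ℕ, 1 ≤ n →
      prodProb P₁ {ω : Fin n → 𝒳 | S1 P₁ P₂ n ω / n ≤
          kl (tilt P₁ P₂ l₁) P₂ - kl (tilt P₁ P₂ l₁) P₁}
        ≤ Real.exp (-((n : ℝ) * kl (tilt P₁ P₂ l₁) P₁)) ∧
      prodProb P₂ {ω : Fin n → 𝒳 |
          kl (tilt P₁ P₂ l₂) P₂ - kl (tilt P₁ P₂ l₂) P₁ ≤ S1 P₁ P₂ n ω / n}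
        ≤ Real.exp (-((n : ℝ) * kl (tilt P₁ P₂ l₂) P₂)) ∧
      prodProb P₁ {ω : Fin n → 𝒳 |
          kl (tilt P₁ P₂ l₁) P₂ - kl (tilt P₁ P₂ l₁) P₁ < S1 P₁ P₂ n ω / n ∧
          S1 P₁ P₂ n ω / n < kl (tilt P₁ P₂ l₂) P₂ - kl (tilt P₁ P₂ l₂) P₁}
        ≤ Real.exp (-(γ * n)) ∧
      prodProb P₂ {ω : Fin n → 𝒳 |
          kl (tilt P₁ P₂ l₁) P₂ - kl (tilt P₁ P₂ l₁) P₁ < S1 P₁ P₂ n ω / n ∧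
          S1 P₁ P₂ n ω / n < kl (tilt P₁ P₂ l₂) P₂ - kl (tilt P₁ P₂ l₂) P₁}
        ≤ Real.exp (-(γ * n)) := by
  intro n hn
  have hnpos : (0:ℝ) < (n:ℝ) := by exact_mod_cast hn
  have hβ : kl (tilt P₁ P₂ l₁) P₂ - kl (tilt P₁ P₂ l₁) P₁ = RejAux.alphaT P₁ P₂ l₁ :=
    RejAux.kl_sub h1pos h2pos l₁
  have hα : kl (tilt P₁ P₂ l₂) P₂ - kl (tilt P₁ P₂ l₂) P₁ = RejAux.alphaT P₁ P₂ l₂ :=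
    RejAux.kl_sub h1pos h2pos l₂
  refine ⟨?_, ?_, ?_, ?_⟩
  · have hset : {ω : Fin n → 𝒳 | S1 P₁ P₂ n ω / n ≤
        kl (tilt P₁ P₂ l₁) P₂ - kl (tilt P₁ P₂ l₁) P₁}
        = {ω : Fin n → 𝒳 | S1 P₁ P₂ n ω ≤ RejAux.alphaT P₁ P₂ l₁ * n} := by
      ext ω
      rw [Set.mem_setOf_eq, Set.mem_setOf_eq, div_le_iff₀ hnpos, hβ]
    rw [hset]
    exact RejAux.bound_left h1pos h2pos l₁ hl₁ n
  · have hset : {ω : Fin n → 𝒳 |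
        kl (tilt P₁ P₂ l₂) P₂ - kl (tilt P₁ P₂ l₂) P₁ ≤ S1 P₁ P₂ n ω / n}
        = {ω : Fin n → 𝒳 | RejAux.alphaT P₁ P₂ l₂ * n ≤ S1 P₁ P₂ n ω} := by
      ext ω
      rw [Set.mem_setOf_eq, Set.mem_setOf_eq, le_div_iff₀ hnpos, hα]
    rw [hset]
    exact RejAux.bound_right h1pos h2pos l₂ hl₂ n
  · have hsub : {ω : Fin n → 𝒳 |
        kl (tilt P₁ P₂ l₁) P₂ - kl (tilt P₁ P₂ l₁) P₁ < S1 P₁ P₂ n ω / n ∧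
        S1 P₁ P₂ n ω / n < kl (tilt P₁ P₂ l₂) P₂ - kl (tilt P₁ P₂ l₂) P₁}
        ⊆ {ω : Fin n → 𝒳 | S1 P₁ P₂ n ω ≤ RejAux.alphaT P₁ P₂ l₂ * n} := by
      intro ω hω
      rw [Set.mem_setOf_eq]
      rw [Set.mem_setOf_eq, hα] at hω
      have := hω.2
      rw [div_lt_iff₀ hnpos] at this
      exact this.le
    have hb := RejAux.bound_left h1pos h2pos l₂ hl₂ n
    rw [hg2] at hb
    calc prodProb P₁ _ ≤ _ := RejAux.prodProb_mono P₁ (fun x => (h1pos x).le) hsub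
      _ ≤ Real.exp (-((n:ℝ) * γ)) := hb
      _ = Real.exp (-(γ * n)) := by rw [mul_comm]
  · have hsub : {ω : Fin n → 𝒳 |
        kl (tilt P₁ P₂ l₁) P₂ - kl (tilt P₁ P₂ l₁) P₁ < S1 P₁ P₂ n ω / n ∧
        S1 P₁ P₂ n ω / n < kl (tilt P₁ P₂ l₂) P₂ - kl (tilt P₁ P₂ l₂) P₁}
        ⊆ {ω : Fin n → 𝒳 | RejAux.alphaT P₁ P₂ l₁ * n ≤ S1 P₁ P₂ n ω} := by
      intro ω hω
      rw [Set.mem_setOf_eq]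
      rw [Set.mem_setOf_eq, hβ] at hω
      have := hω.1
      rw [lt_div_iff₀ hnpos] at this
      exact this.le
    have hb := RejAux.bound_right h1pos h2pos l₁ hl₁ n
    rw [hg1] at hb
    calc prodProb P₂ _ ≤ _ := RejAux.prodProb_mono P₂ (fun x => (h2pos x).le) hsub
      _ ≤ Real.exp (-((n:ℝ) * γ)) := hb
      _ = Real.exp (-(γ * n)) := by rw [mul_comm]
end

section
/- Let γ > 0, c > 0, and l ∈ ℤ⁺, and for each n ∈ ℕ let τ_n be a random variable on a probability space with n ≤ τ_n ≤ c·n^l almost surely and P(τ_n ≠ n) ≤ e^{−γn}. Then for every real m ≥ 1, lim_{n→∞} E[(τ_n/n)^m] = 1, and lim_{n→∞} Var(τ_n) = 0. -/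
open MeasureTheory Filter


lemma integral_small {Ω : Type*} [MeasurableSpace Ω] (μ : Measure Ω) [IsProbabilityMeasure μ]
    (h : Ω → ℝ) (hint : Integrable h μ) {S : Set Ω} (hS : MeasurableSet S) {M : ℝ}
    (hb : ∀ᵐ ω ∂μ, |h ω| ≤ Set.indicator S (fun _ => M) ω) :
    |∫ ω, h ω ∂μ| ≤ M * (μ S).toReal := by
  calc |∫ ω, h ω ∂μ| ≤ ∫ ω, |h ω| ∂μ := by
        simpa [Real.norm_eq_abs] using norm_integral_le_integral_norm (μ := μ) h
    _ ≤ ∫ ω, Set.indicator S (fun _ => M) ω ∂μ :=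
        integral_mono_ae hint.abs ((integrable_const M).indicator hS) hb
    _ = M * (μ S).toReal := by
        rw [integral_indicator_const _ hS]; simp [mul_comm, Measure.real]

lemma decay (s b : ℝ) (hb : 0 < b) :
    Tendsto (fun n : ℕ => (n : ℝ) ^ s * Real.exp (-(b * n))) atTop (nhds 0) := by
  have := (tendsto_rpow_mul_exp_neg_mul_atTop_nhds_zero s b hb).comp
    tendsto_natCast_atTop_atTop (α := ℕ)
  refine this.congr fun n => by simp [Function.comp, neg_mul]

lemma decayNat (k : ℕ) (b : ℝ) (hb : 0 < b) :
    Tendsto (fun n : ℕ => (n : ℝ) ^ k * Real.exp (-(b * n))) atTop (nhds 0) :=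
  (decay k b hb).congr fun n => by rw [Real.rpow_natCast]

/-- Lemma 2: if the stopping time `τ_n` of a γ-almost-fixed-length test satisfies
`n ≤ τ_n ≤ c n^l` a.s. and `P(τ_n ≠ n) ≤ e^{−γn}`, then all moments of `τ_n/n`
converge to 1 and the variance of `τ_n` converges to 0. -/
theorem afl_tau_moments (γ c : ℝ) (hγ : 0 < γ) (hc : 0 < c) (l : ℕ) (hl : 0 < l)
    (Ω : ℕ → Type*) [∀ n, MeasurableSpace (Ω n)]
    (μ : ∀ n, Measure (Ω n)) [∀ n, IsProbabilityMeasure (μ n)]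
    (τ : ∀ n, Ω n → ℝ) (hmeas : ∀ n : ℕ, Measurable (τ n))
    (hbound : ∀ n : ℕ, ∀ᵐ ω ∂(μ n), (n : ℝ) ≤ τ n ω ∧ τ n ω ≤ c * (n : ℝ) ^ l)
    (htail : ∀ n : ℕ, μ n {ω | τ n ω ≠ (n : ℝ)} ≤ ENNReal.ofReal (Real.exp (-(γ * n)))) :
    (∀ m : ℝ, 1 ≤ m →
      Tendsto (fun n : ℕ => ∫ ω, (τ n ω / n) ^ m ∂(μ n)) atTop (nhds 1)) ∧
    Tendsto (fun n : ℕ =>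
        (∫ ω, (τ n ω) ^ 2 ∂(μ n)) - (∫ ω, τ n ω ∂(μ n)) ^ 2) atTop (nhds 0) := by
  have hSm : ∀ n : ℕ, MeasurableSet {ω | τ n ω ≠ (n : ℝ)} :=
    fun n => ((hmeas n) (measurableSet_singleton ((n : ℝ)))).compl
  have hμS : ∀ n : ℕ, ((μ n) {ω | τ n ω ≠ (n : ℝ)}).toReal ≤ Real.exp (-(γ * n)) :=
    fun n => ENNReal.toReal_le_of_le_ofReal (Real.exp_pos _).le (htail n)
  -- integrability of τ n and τ n ^ 2 for n ≥ 1
  have hint : ∀ n : ℕ, 1 ≤ n → Integrable (τ n) (μ n) := by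
    intro n hn
    have hn' : (1 : ℝ) ≤ (n : ℝ) := by exact_mod_cast hn
    refine (integrable_const (c * (n : ℝ) ^ l)).mono' (hmeas n).aestronglyMeasurable ?_
    filter_upwards [hbound n] with ω hω
    obtain ⟨h1, h2⟩ := hω
    rw [Real.norm_eq_abs, abs_le]
    constructor <;> nlinarith
  have hint2 : ∀ n : ℕ, 1 ≤ n → Integrable (fun ω => τ n ω ^ 2) (μ n) := by
    intro n hn
    have hn' : (1 : ℝ) ≤ (n : ℝ) := by exact_mod_cast hn
    refine (integrable_const ((c * (n : ℝ) ^ l) ^ 2)).mono' ?_ ?_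
    · exact ((hmeas n).pow_const 2).aestronglyMeasurable
    filter_upwards [hbound n] with ω hω
    obtain ⟨h1, h2⟩ := hω
    rw [Real.norm_eq_abs, abs_le]
    constructor <;> nlinarith
  constructor
  · -- moments
    intro m hm
    have hm0 : (0 : ℝ) ≤ m := le_trans zero_le_one hm
    have key : ∀ᶠ n : ℕ in atTop,
        ‖(∫ ω, (τ n ω / n) ^ m ∂(μ n)) - 1‖ ≤
          (c ^ m * (n : ℝ) ^ ((l : ℝ) * m)) * Real.exp (-(γ * n)) := by
      filter_upwards [eventually_ge_atTop 1] with n hn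
      have hn' : (1 : ℝ) ≤ (n : ℝ) := by exact_mod_cast hn
      have hn0 : (0 : ℝ) < (n : ℝ) := by linarith
      set M : ℝ := (c * (n : ℝ) ^ l) ^ m with hM
      have hM0 : 0 ≤ M := Real.rpow_nonneg (by positivity) m
      have hintm : Integrable (fun ω => (τ n ω / n) ^ m) (μ n) := by
        refine (integrable_const M).mono' ?_ ?_
        · exact Measurable.aestronglyMeasurable (by measurability)
        filter_upwards [hbound n] with ω hω
        obtain ⟨h1, h2⟩ := hω
        have h0 : (0 : ℝ) ≤ τ n ω / n := div_nonneg (by linarith) hn0.le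
        have h4 : τ n ω / n ≤ c * (n : ℝ) ^ l :=
          le_trans (div_le_self (by linarith) hn') h2
        rw [Real.norm_eq_abs, abs_of_nonneg (Real.rpow_nonneg h0 m)]
        exact Real.rpow_le_rpow h0 h4 hm0
      have heq : (∫ ω, (τ n ω / n) ^ m ∂(μ n)) - 1
          = ∫ ω, ((τ n ω / n) ^ m - 1) ∂(μ n) := by
        rw [integral_sub hintm (integrable_const 1), integral_const]; simp
      have hb : ∀ᵐ ω ∂(μ n), |(τ n ω / n) ^ m - 1| ≤
          Set.indicator {ω | τ n ω ≠ (n : ℝ)} (fun _ => M) ω := by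
        filter_upwards [hbound n] with ω hω
        obtain ⟨h1, h2⟩ := hω
        by_cases hωS : ω ∈ {ω | τ n ω ≠ (n : ℝ)}
        · rw [Set.indicator_of_mem hωS]
          have h3 : 1 ≤ τ n ω / n := (one_le_div hn0).2 h1
          have h4 : τ n ω / n ≤ c * (n : ℝ) ^ l :=
            le_trans (div_le_self (by linarith) hn') h2
          have h5 : 1 ≤ (τ n ω / n) ^ m := Real.one_le_rpow h3 hm0
          have h6 : (τ n ω / n) ^ m ≤ M := Real.rpow_le_rpow (by linarith) h4 hm0
          rw [abs_of_nonneg (by linarith)]; linarith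
        · rw [Set.indicator_of_notMem hωS]
          have hτ : τ n ω = (n : ℝ) := not_not.1 hωS
          simp [hτ, div_self hn0.ne', Real.one_rpow]
      have hsmall := integral_small (μ n) _ (hintm.sub (integrable_const 1)) (hSm n) hb
      have hMeq : M = c ^ m * (n : ℝ) ^ ((l : ℝ) * m) := by
        rw [hM, Real.mul_rpow hc.le (by positivity), ← Real.rpow_natCast (n : ℝ) l,
          ← Real.rpow_mul hn0.le]
      rw [Real.norm_eq_abs, heq]
      calc |∫ ω, ((τ n ω / n) ^ m - 1) ∂(μ n)|
          ≤ M * ((μ n) {ω | τ n ω ≠ (n : ℝ)}).toReal := hsmall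
        _ ≤ M * Real.exp (-(γ * n)) := mul_le_mul_of_nonneg_left (hμS n) hM0
        _ = (c ^ m * (n : ℝ) ^ ((l : ℝ) * m)) * Real.exp (-(γ * n)) := by rw [hMeq]
    have hdecay : Tendsto (fun n : ℕ =>
        (c ^ m * (n : ℝ) ^ ((l : ℝ) * m)) * Real.exp (-(γ * n))) atTop (nhds 0) := by
      have := (decay ((l : ℝ) * m) γ hγ).const_mul (c ^ m)
      simpa [mul_assoc] using this
    have h0 := squeeze_zero_norm' key hdecay
    have := h0.add (tendsto_const_nhds (x := (1 : ℝ)))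
    simpa using this
  · -- variance
    set A : ℕ → ℝ := fun n => ∫ ω, (τ n ω ^ 2 - (n : ℝ) ^ 2) ∂(μ n) with hA
    set B : ℕ → ℝ := fun n => ∫ ω, (τ n ω - (n : ℝ)) ∂(μ n) with hB
    have hAb : ∀ᶠ n : ℕ in atTop,
        ‖A n‖ ≤ (c ^ 2 * (n : ℝ) ^ (2 * l)) * Real.exp (-(γ * n)) := by
      filter_upwards [eventually_ge_atTop 1] with n hn
      have hn' : (1 : ℝ) ≤ (n : ℝ) := by exact_mod_cast hn
      have hb : ∀ᵐ ω ∂(μ n), |τ n ω ^ 2 - (n : ℝ) ^ 2| ≤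
          Set.indicator {ω | τ n ω ≠ (n : ℝ)} (fun _ => (c * (n : ℝ) ^ l) ^ 2) ω := by
        filter_upwards [hbound n] with ω hω
        obtain ⟨h1, h2⟩ := hω
        by_cases hωS : ω ∈ {ω | τ n ω ≠ (n : ℝ)}
        · rw [Set.indicator_of_mem hωS, abs_of_nonneg (by nlinarith)]; nlinarith
        · rw [Set.indicator_of_notMem hωS]
          have hτ : τ n ω = (n : ℝ) := not_not.1 hωS
          simp [hτ]
      have hsmall := integral_small (μ n) _
        ((hint2 n hn).sub (integrable_const _)) (hSm n) hb
      have hle : (c * (n : ℝ) ^ l) ^ 2 * ((μ n) {ω | τ n ω ≠ (n : ℝ)}).toReal ≤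
          (c * (n : ℝ) ^ l) ^ 2 * Real.exp (-(γ * n)) :=
        mul_le_mul_of_nonneg_left (hμS n) (by positivity)
      rw [Real.norm_eq_abs]
      calc |A n| ≤ _ := hsmall
        _ ≤ (c * (n : ℝ) ^ l) ^ 2 * Real.exp (-(γ * n)) := hle
        _ = (c ^ 2 * (n : ℝ) ^ (2 * l)) * Real.exp (-(γ * n)) := by
            rw [mul_pow, ← pow_mul]; ring_nf
    have hBb : ∀ᶠ n : ℕ in atTop,
        ‖B n‖ ≤ (c * (n : ℝ) ^ l) * Real.exp (-(γ * n)) := by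
      filter_upwards [eventually_ge_atTop 1] with n hn
      have hn' : (1 : ℝ) ≤ (n : ℝ) := by exact_mod_cast hn
      have hb : ∀ᵐ ω ∂(μ n), |τ n ω - (n : ℝ)| ≤
          Set.indicator {ω | τ n ω ≠ (n : ℝ)} (fun _ => c * (n : ℝ) ^ l) ω := by
        filter_upwards [hbound n] with ω hω
        obtain ⟨h1, h2⟩ := hω
        by_cases hωS : ω ∈ {ω | τ n ω ≠ (n : ℝ)}
        · rw [Set.indicator_of_mem hωS, abs_of_nonneg (by linarith)]; linarith
        · rw [Set.indicator_of_notMem hωS]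
          have hτ : τ n ω = (n : ℝ) := not_not.1 hωS
          simp [hτ]
      have hsmall := integral_small (μ n) _
        ((hint n hn).sub (integrable_const _)) (hSm n) hb
      rw [Real.norm_eq_abs]
      calc |B n| ≤ _ := hsmall
        _ ≤ (c * (n : ℝ) ^ l) * Real.exp (-(γ * n)) :=
            mul_le_mul_of_nonneg_left (hμS n) (by positivity)
    have hAt : Tendsto A atTop (nhds 0) := by
      refine squeeze_zero_norm' hAb ?_
      have := (decayNat (2 * l) γ hγ).const_mul (c ^ 2)
      simpa [mul_assoc] using this
    have hBt : Tendsto B atTop (nhds 0) := by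
      refine squeeze_zero_norm' hBb ?_
      have := (decayNat l γ hγ).const_mul c
      simpa [mul_assoc] using this
    have hnBt : Tendsto (fun n : ℕ => 2 * (n : ℝ) * B n) atTop (nhds 0) := by
      refine squeeze_zero_norm'
        (a := fun n : ℕ => (2 * c * (n : ℝ) ^ (l + 1)) * Real.exp (-(γ * n))) ?_ ?_
      · filter_upwards [hBb, eventually_ge_atTop 1] with n hBn hn
        have hn' : (1 : ℝ) ≤ (n : ℝ) := by exact_mod_cast hn
        rw [Real.norm_eq_abs, abs_mul, abs_of_nonneg (by positivity : (0:ℝ) ≤ 2 * (n:ℝ))]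
        calc 2 * (n : ℝ) * |B n| ≤ 2 * (n : ℝ) * ((c * (n : ℝ) ^ l) * Real.exp (-(γ * n))) := by
              refine mul_le_mul_of_nonneg_left ?_ (by positivity)
              simpa [Real.norm_eq_abs] using hBn
          _ = (2 * c * (n : ℝ) ^ (l + 1)) * Real.exp (-(γ * n)) := by ring
      · have := (decayNat (l + 1) γ hγ).const_mul (2 * c)
        simpa [mul_assoc] using this
    have hB2t : Tendsto (fun n : ℕ => (B n) ^ 2) atTop (nhds 0) := by
      have := hBt.mul hBt
      simpa [sq] using this
    have hVt : Tendsto (fun n : ℕ => A n - 2 * (n : ℝ) * B n - (B n) ^ 2) atTop (nhds 0) := by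
      have := (hAt.sub hnBt).sub hB2t
      simpa using this
    refine hVt.congr' ?_
    filter_upwards [eventually_ge_atTop 1] with n hn
    have e1 : (∫ ω, τ n ω ^ 2 ∂(μ n)) = (n : ℝ) ^ 2 + A n := by
      have := integral_sub (hint2 n hn) (integrable_const ((n : ℝ) ^ 2)) (μ := μ n)
      rw [hA]; simp only at this ⊢
      rw [this, integral_const]; simp
    have e2 : (∫ ω, τ n ω ∂(μ n)) = (n : ℝ) + B n := by
      have := integral_sub (hint n hn) (integrable_const ((n : ℝ))) (μ := μ n)
      rw [hB]; simp only at this ⊢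
      rw [this, integral_const]; simp
    rw [e1, e2]; ring
end

section
/- The map λ ↦ D(P^(λ)‖P₁) is continuous and strictly increasing on [0,1], with value 0 at λ = 0 and D(P₂‖P₁) at λ = 1; the map λ ↦ D(P^(λ)‖P₂) is continuous and strictly decreasing on [0,1], with value D(P₁‖P₂) at λ = 0 and 0 at λ = 1. Consequently there exists a unique λ* ∈ (0,1) with D(P^(λ*)‖P₁) = D(P^(λ*)‖P₂), and the Chernoff exponent D* = D(P^(λ*)‖P₁) is strictly positive. -/
open Real Filter Finset MeasureTheory
open scoped Classical

variable {𝒳 : Type*} [Fintype 𝒳] [DecidableEq 𝒳] [Nonempty 𝒳]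

/-! ### Auxiliary machinery for the Chernoff theorem -/

/-- Log-likelihood ratio `log (P₂ x / P₁ x)`. -/
noncomputable def chT (P₁ P₂ : 𝒳 → ℝ) (x : 𝒳) : ℝ := Real.log (P₂ x / P₁ x)

/-- Partition function of the tilted family. -/
noncomputable def chZ0 (P₁ P₂ : 𝒳 → ℝ) (l : ℝ) : ℝ :=
  ∑ x, P₁ x * Real.exp (l * chT P₁ P₂ x)

noncomputable def chZ1 (P₁ P₂ : 𝒳 → ℝ) (l : ℝ) : ℝ :=
  ∑ x, P₁ x * chT P₁ P₂ x * Real.exp (l * chT P₁ P₂ x)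

noncomputable def chZ2 (P₁ P₂ : 𝒳 → ℝ) (l : ℝ) : ℝ :=
  ∑ x, P₁ x * (chT P₁ P₂ x) ^ 2 * Real.exp (l * chT P₁ P₂ x)

lemma ch_exp_tf {P₁ P₂ : 𝒳 → ℝ} (h1 : ∀ x, 0 < P₁ x) (h2 : ∀ x, 0 < P₂ x) (x : 𝒳) :
    P₁ x * Real.exp (chT P₁ P₂ x) = P₂ x := by
  rw [chT, Real.exp_log (div_pos (h2 x) (h1 x))]
  field_simp
  exact mul_div_cancel_left₀ _ (ne_of_gt (h1 x))

lemma ch_pow_eq {P₁ P₂ : 𝒳 → ℝ} (h1 : ∀ x, 0 < P₁ x) (h2 : ∀ x, 0 < P₂ x) (l : ℝ) (x : 𝒳) :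
    P₁ x ^ (1 - l) * P₂ x ^ l = P₁ x * Real.exp (l * chT P₁ P₂ x) := by
  rw [Real.rpow_def_of_pos (h1 x), Real.rpow_def_of_pos (h2 x), ← Real.exp_add]
  conv_rhs => rw [← Real.exp_log (h1 x), ← Real.exp_add]
  rw [chT, Real.log_div (ne_of_gt (h2 x)) (ne_of_gt (h1 x))]
  congr 1
  ring

lemma chZ0_pos {P₁ P₂ : 𝒳 → ℝ} (h1 : ∀ x, 0 < P₁ x) (l : ℝ) : 0 < chZ0 P₁ P₂ l :=
  Finset.sum_pos (fun x _ => mul_pos (h1 x) (Real.exp_pos _)) Finset.univ_nonempty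

lemma ch_hasDerivAt_Z0 (P₁ P₂ : 𝒳 → ℝ) (l : ℝ) :
    HasDerivAt (chZ0 P₁ P₂) (chZ1 P₁ P₂ l) l := by
  unfold chZ0 chZ1
  refine HasDerivAt.fun_sum fun x _ => ?_
  have h : HasDerivAt (fun l : ℝ => Real.exp (l * chT P₁ P₂ x))
      (chT P₁ P₂ x * Real.exp (l * chT P₁ P₂ x)) l := by
    simpa [mul_comm] using ((hasDerivAt_id l).mul_const (chT P₁ P₂ x)).exp
  have := h.const_mul (P₁ x)
  refine this.congr_deriv ?_
  ring

lemma ch_hasDerivAt_Z1 (P₁ P₂ : 𝒳 → ℝ) (l : ℝ) :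
    HasDerivAt (chZ1 P₁ P₂) (chZ2 P₁ P₂ l) l := by
  unfold chZ1 chZ2
  refine HasDerivAt.fun_sum fun x _ => ?_
  have h : HasDerivAt (fun l : ℝ => Real.exp (l * chT P₁ P₂ x))
      (chT P₁ P₂ x * Real.exp (l * chT P₁ P₂ x)) l := by
    simpa [mul_comm] using ((hasDerivAt_id l).mul_const (chT P₁ P₂ x)).exp
  have := h.const_mul (P₁ x * chT P₁ P₂ x)
  refine this.congr_deriv ?_
  ring

/-- Strict Cauchy–Schwarz for positive weights and a nonconstant function. -/
lemma ch_cs {w T : 𝒳 → ℝ} (hw : ∀ x, 0 < w x) {x₀ y₀ : 𝒳} (hxy : T x₀ ≠ T y₀) :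
    (∑ x, w x * T x) ^ 2 < (∑ x, w x * T x ^ 2) * (∑ x, w x) := by
  have hxy' : ∀ x y : 𝒳, w x * w y * (T x - T y) ^ 2 =
      (w x * T x ^ 2) * w y - (2 * (w x * T x)) * (w y * T y) + w x * (w y * T y ^ 2) := by
    intro x y; ring
  have key : ∑ x, ∑ y, w x * w y * (T x - T y) ^ 2 =
      2 * ((∑ x, w x * T x ^ 2) * (∑ x, w x)) - 2 * (∑ x, w x * T x) ^ 2 := by
    simp_rw [hxy', Finset.sum_add_distrib, Finset.sum_sub_distrib, ← Finset.mul_sum,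
      ← Finset.sum_mul]
    rw [show (∑ x, 2 * (w x * T x)) = 2 * ∑ x, w x * T x from (Finset.mul_sum _ _ _).symm]
    ring
  have pos : 0 < ∑ x, ∑ y, w x * w y * (T x - T y) ^ 2 := by
    refine Finset.sum_pos' (fun x _ => Finset.sum_nonneg fun y _ =>
        mul_nonneg (mul_nonneg (hw x).le (hw y).le) (sq_nonneg _))
      ⟨x₀, Finset.mem_univ _, ?_⟩
    refine Finset.sum_pos' (fun y _ =>
        mul_nonneg (mul_nonneg (hw x₀).le (hw y).le) (sq_nonneg _))
      ⟨y₀, Finset.mem_univ _, ?_⟩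
    have h := sub_ne_zero.mpr hxy
    exact mul_pos (mul_pos (hw x₀) (hw y₀))
      (lt_of_le_of_ne (sq_nonneg _) (Ne.symm (pow_ne_zero 2 h)))
  nlinarith [key, pos]

lemma ch_T_nonconst {P₁ P₂ : 𝒳 → ℝ} (h1 : ∀ x, 0 < P₁ x) (h2 : ∀ x, 0 < P₂ x)
    (h1sum : ∑ x, P₁ x = 1) (h2sum : ∑ x, P₂ x = 1) (hne : P₁ ≠ P₂) :
    ∃ x y, chT P₁ P₂ x ≠ chT P₁ P₂ y := by
  by_contra h
  push_neg at h
  apply hne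
  obtain ⟨z⟩ := (inferInstance : Nonempty 𝒳)
  have hone : (1 : ℝ) = Real.exp (chT P₁ P₂ z) := by
    calc (1 : ℝ) = ∑ x, P₂ x := h2sum.symm
      _ = ∑ x, P₁ x * Real.exp (chT P₁ P₂ x) :=
        (Finset.sum_congr rfl fun x _ => (ch_exp_tf h1 h2 x).symm)
      _ = ∑ x, P₁ x * Real.exp (chT P₁ P₂ z) :=
        Finset.sum_congr rfl fun x _ => by rw [h x z]
      _ = Real.exp (chT P₁ P₂ z) := by rw [← Finset.sum_mul, h1sum, one_mul]
  have hz : chT P₁ P₂ z = 0 := by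
    have := Real.exp_eq_one_iff (chT P₁ P₂ z) |>.mp hone.symm
    exact this
  funext x
  have : P₁ x * Real.exp (chT P₁ P₂ x) = P₂ x := ch_exp_tf h1 h2 x
  rw [h x z, hz, Real.exp_zero, mul_one] at this
  exact this

lemma ch_discr_pos {P₁ P₂ : 𝒳 → ℝ} (h1 : ∀ x, 0 < P₁ x) (h2 : ∀ x, 0 < P₂ x)
    (h1sum : ∑ x, P₁ x = 1) (h2sum : ∑ x, P₂ x = 1) (hne : P₁ ≠ P₂) (l : ℝ) :
    chZ1 P₁ P₂ l ^ 2 < chZ2 P₁ P₂ l * chZ0 P₁ P₂ l := by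
  obtain ⟨x₀, y₀, hxy⟩ := ch_T_nonconst h1 h2 h1sum h2sum hne
  have hw : ∀ x, 0 < P₁ x * Real.exp (l * chT P₁ P₂ x) :=
    fun x => mul_pos (h1 x) (Real.exp_pos _)
  have := ch_cs (w := fun x => P₁ x * Real.exp (l * chT P₁ P₂ x)) (T := chT P₁ P₂) hw hxy
  have e1 : chZ1 P₁ P₂ l = ∑ x, (P₁ x * Real.exp (l * chT P₁ P₂ x)) * chT P₁ P₂ x := by
    unfold chZ1; exact Finset.sum_congr rfl fun x _ => by ring
  have e2 : chZ2 P₁ P₂ l = ∑ x, (P₁ x * Real.exp (l * chT P₁ P₂ x)) * chT P₁ P₂ x ^ 2 := by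
    unfold chZ2; exact Finset.sum_congr rfl fun x _ => by ring
  rw [e1, e2, chZ0]
  exact this

lemma ch_kl_tilt₁ {P₁ P₂ : 𝒳 → ℝ} (h1 : ∀ x, 0 < P₁ x) (h2 : ∀ x, 0 < P₂ x) (l : ℝ) :
    kl (tilt P₁ P₂ l) P₁ =
      l * (chZ1 P₁ P₂ l / chZ0 P₁ P₂ l) - Real.log (chZ0 P₁ P₂ l) := by
  have hZ := chZ0_pos (P₂ := P₂) h1 l
  have hsum : ∑ a, P₁ a ^ (1 - l) * P₂ a ^ l = chZ0 P₁ P₂ l :=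
    Finset.sum_congr rfl fun a _ => ch_pow_eq h1 h2 l a
  have htilt : ∀ x, tilt P₁ P₂ l x =
      P₁ x * Real.exp (l * chT P₁ P₂ x) / chZ0 P₁ P₂ l := by
    intro x; rw [tilt, hsum, ch_pow_eq h1 h2 l]
  have hterm : ∀ x, tilt P₁ P₂ l x * Real.log (tilt P₁ P₂ l x / P₁ x) =
      (l * (P₁ x * chT P₁ P₂ x * Real.exp (l * chT P₁ P₂ x)) -
        Real.log (chZ0 P₁ P₂ l) * (P₁ x * Real.exp (l * chT P₁ P₂ x))) / chZ0 P₁ P₂ l := by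
    intro x
    rw [htilt x]
    have h3 : P₁ x * Real.exp (l * chT P₁ P₂ x) / chZ0 P₁ P₂ l / P₁ x =
        Real.exp (l * chT P₁ P₂ x) / chZ0 P₁ P₂ l := by
      rw [div_div, mul_comm (chZ0 P₁ P₂ l) (P₁ x), ← div_div,
        mul_div_cancel_left₀ _ (ne_of_gt (h1 x))]
    rw [h3, Real.log_div (Real.exp_ne_zero _) (ne_of_gt hZ), Real.log_exp]
    field_simp
  rw [kl]
  simp_rw [hterm]
  rw [← Finset.sum_div, Finset.sum_sub_distrib, ← Finset.mul_sum, ← Finset.mul_sum,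
    ← chZ1, ← chZ0]
  field_simp

lemma ch_kl_tilt₂ {P₁ P₂ : 𝒳 → ℝ} (h1 : ∀ x, 0 < P₁ x) (h2 : ∀ x, 0 < P₂ x) (l : ℝ) :
    kl (tilt P₁ P₂ l) P₂ =
      (l - 1) * (chZ1 P₁ P₂ l / chZ0 P₁ P₂ l) - Real.log (chZ0 P₁ P₂ l) := by
  have hZ := chZ0_pos (P₂ := P₂) h1 l
  have hsum : ∑ a, P₁ a ^ (1 - l) * P₂ a ^ l = chZ0 P₁ P₂ l :=
    Finset.sum_congr rfl fun a _ => ch_pow_eq h1 h2 l a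
  have htilt : ∀ x, tilt P₁ P₂ l x =
      P₁ x * Real.exp (l * chT P₁ P₂ x) / chZ0 P₁ P₂ l := by
    intro x; rw [tilt, hsum, ch_pow_eq h1 h2 l]
  have hterm : ∀ x, tilt P₁ P₂ l x * Real.log (tilt P₁ P₂ l x / P₂ x) =
      ((l - 1) * (P₁ x * chT P₁ P₂ x * Real.exp (l * chT P₁ P₂ x)) -
        Real.log (chZ0 P₁ P₂ l) * (P₁ x * Real.exp (l * chT P₁ P₂ x))) / chZ0 P₁ P₂ l := by
    intro x
    rw [htilt x]
    have h3 : P₁ x * Real.exp (l * chT P₁ P₂ x) / chZ0 P₁ P₂ l / P₂ x =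
        Real.exp ((l - 1) * chT P₁ P₂ x) / chZ0 P₁ P₂ l := by
      rw [← ch_exp_tf h1 h2 x]
      rw [show (l - 1) * chT P₁ P₂ x = l * chT P₁ P₂ x - chT P₁ P₂ x by ring,
        Real.exp_sub]
      have ha := ne_of_gt (h1 x)
      have hz' := ne_of_gt hZ
      have he := Real.exp_ne_zero (chT P₁ P₂ x)
      field_simp
    rw [h3, Real.log_div (Real.exp_ne_zero _) (ne_of_gt hZ), Real.log_exp]
    field_simp
  rw [kl]
  simp_rw [hterm]
  rw [← Finset.sum_div, Finset.sum_sub_distrib, ← Finset.mul_sum, ← Finset.mul_sum,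
    ← chZ1, ← chZ0]
  field_simp

/-- Gibbs' inequality: strict positivity of KL divergence for distinct positive pmfs. -/
lemma ch_kl_pos {Q P : 𝒳 → ℝ} (hQ : ∀ x, 0 < Q x) (hP : ∀ x, 0 < P x)
    (hQs : ∑ x, Q x = 1) (hPs : ∑ x, P x = 1) (hne : Q ≠ P) : 0 < kl Q P := by
  obtain ⟨x₀, hx₀⟩ : ∃ x, Q x ≠ P x := Function.ne_iff.mp hne
  have hstrict : ∑ x, Q x * Real.log (P x / Q x) < ∑ x, (P x - Q x) := by
    refine Finset.sum_lt_sum (fun x _ => ?_) ⟨x₀, Finset.mem_univ _, ?_⟩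
    · have hle : Real.log (P x / Q x) ≤ P x / Q x - 1 :=
        Real.log_le_sub_one_of_pos (div_pos (hP x) (hQ x))
      have h := mul_le_mul_of_nonneg_left hle (le_of_lt (hQ x))
      calc Q x * Real.log (P x / Q x) ≤ Q x * (P x / Q x - 1) := h
        _ = P x - Q x := by
          rw [mul_sub, mul_one, mul_div_cancel₀ _ (ne_of_gt (hQ x))]
    · have hne1 : P x₀ / Q x₀ ≠ 1 := by
        intro hcon
        apply hx₀
        rw [div_eq_one_iff_eq (ne_of_gt (hQ x₀))] at hcon
        exact hcon.symm
      have hlt : Real.log (P x₀ / Q x₀) < P x₀ / Q x₀ - 1 :=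
        Real.log_lt_sub_one_of_pos (div_pos (hP x₀) (hQ x₀)) hne1
      have h := mul_lt_mul_of_pos_left hlt (hQ x₀)
      calc Q x₀ * Real.log (P x₀ / Q x₀) < Q x₀ * (P x₀ / Q x₀ - 1) := h
        _ = P x₀ - Q x₀ := by
          rw [mul_sub, mul_one, mul_div_cancel₀ _ (ne_of_gt (hQ x₀))]
  have hsum : ∑ x, (P x - Q x) = 0 := by
    rw [Finset.sum_sub_distrib, hPs, hQs]; ring
  have hkl : kl Q P = -∑ x, Q x * Real.log (P x / Q x) := by
    rw [kl, ← Finset.sum_neg_distrib]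
    refine Finset.sum_congr rfl fun x _ => ?_
    rw [show P x / Q x = (Q x / P x)⁻¹ by rw [inv_div], Real.log_inv]
    ring
  rw [hkl]
  linarith

noncomputable def chH (P₁ P₂ : 𝒳 → ℝ) (l : ℝ) : ℝ := chZ1 P₁ P₂ l / chZ0 P₁ P₂ l

noncomputable def chV (P₁ P₂ : 𝒳 → ℝ) (l : ℝ) : ℝ :=
  (chZ2 P₁ P₂ l * chZ0 P₁ P₂ l - chZ1 P₁ P₂ l * chZ1 P₁ P₂ l) / chZ0 P₁ P₂ l ^ 2

noncomputable def chF (P₁ P₂ : 𝒳 → ℝ) (l : ℝ) : ℝ :=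
  l * chH P₁ P₂ l - Real.log (chZ0 P₁ P₂ l)

noncomputable def chG (P₁ P₂ : 𝒳 → ℝ) (l : ℝ) : ℝ :=
  (l - 1) * chH P₁ P₂ l - Real.log (chZ0 P₁ P₂ l)

lemma chV_pos {P₁ P₂ : 𝒳 → ℝ} (h1 : ∀ x, 0 < P₁ x) (h2 : ∀ x, 0 < P₂ x)
    (h1sum : ∑ x, P₁ x = 1) (h2sum : ∑ x, P₂ x = 1) (hne : P₁ ≠ P₂) (l : ℝ) :
    0 < chV P₁ P₂ l := by
  have hd := ch_discr_pos h1 h2 h1sum h2sum hne l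
  have hz := chZ0_pos (P₂ := P₂) h1 l
  unfold chV
  exact div_pos (by nlinarith) (by positivity)

lemma chH_hasDerivAt {P₁ P₂ : 𝒳 → ℝ} (h1 : ∀ x, 0 < P₁ x) (l : ℝ) :
    HasDerivAt (chH P₁ P₂) (chV P₁ P₂ l) l := by
  unfold chH chV
  exact (ch_hasDerivAt_Z1 P₁ P₂ l).div (ch_hasDerivAt_Z0 P₁ P₂ l)
    (ne_of_gt (chZ0_pos (P₂ := P₂) h1 l))

lemma chF_hasDerivAt {P₁ P₂ : 𝒳 → ℝ} (h1 : ∀ x, 0 < P₁ x) (l : ℝ) :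
    HasDerivAt (chF P₁ P₂) (l * chV P₁ P₂ l) l := by
  have h := ((hasDerivAt_id l).mul (chH_hasDerivAt (P₂ := P₂) h1 l)).sub
    ((ch_hasDerivAt_Z0 P₁ P₂ l).log (ne_of_gt (chZ0_pos (P₂ := P₂) h1 l)))
  refine h.congr_deriv ?_
  simp only [id_eq, one_mul, chH]
  ring

lemma chG_hasDerivAt {P₁ P₂ : 𝒳 → ℝ} (h1 : ∀ x, 0 < P₁ x) (l : ℝ) :
    HasDerivAt (chG P₁ P₂) ((l - 1) * chV P₁ P₂ l) l := by
  have h := (((hasDerivAt_id l).sub_const 1).mul (chH_hasDerivAt (P₂ := P₂) h1 l)).sub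
    ((ch_hasDerivAt_Z0 P₁ P₂ l).log (ne_of_gt (chZ0_pos (P₂ := P₂) h1 l)))
  refine h.congr_deriv ?_
  simp only [id_eq, one_mul, chH]
  ring

lemma chF_eq {P₁ P₂ : 𝒳 → ℝ} (h1 : ∀ x, 0 < P₁ x) (h2 : ∀ x, 0 < P₂ x) (l : ℝ) :
    kl (tilt P₁ P₂ l) P₁ = chF P₁ P₂ l := by
  unfold chF chH
  exact ch_kl_tilt₁ h1 h2 l

lemma chG_eq {P₁ P₂ : 𝒳 → ℝ} (h1 : ∀ x, 0 < P₁ x) (h2 : ∀ x, 0 < P₂ x) (l : ℝ) :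
    kl (tilt P₁ P₂ l) P₂ = chG P₁ P₂ l := by
  unfold chG chH
  exact ch_kl_tilt₂ h1 h2 l

/-- Monotonicity/continuity of `λ ↦ D(P^(λ)‖P_i)`, boundary values, and existence of a
unique `λ* ∈ (0,1)` with `D(P^(λ*)‖P₁) = D(P^(λ*)‖P₂)`, at which the common value
(the Chernoff exponent `D*`) is strictly positive. -/
theorem tilted_kl_monotone_and_chernoff (P₁ P₂ : 𝒳 → ℝ)
    (h1pos : ∀ x, 0 < P₁ x) (h2pos : ∀ x, 0 < P₂ x)
    (h1sum : ∑ x, P₁ x = 1) (h2sum : ∑ x, P₂ x = 1)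
    (hne : P₁ ≠ P₂) :
    ContinuousOn (fun l => kl (tilt P₁ P₂ l) P₁) (Set.Icc 0 1) ∧
    StrictMonoOn (fun l => kl (tilt P₁ P₂ l) P₁) (Set.Icc 0 1) ∧
    kl (tilt P₁ P₂ 0) P₁ = 0 ∧
    kl (tilt P₁ P₂ 1) P₁ = kl P₂ P₁ ∧
    ContinuousOn (fun l => kl (tilt P₁ P₂ l) P₂) (Set.Icc 0 1) ∧
    StrictAntiOn (fun l => kl (tilt P₁ P₂ l) P₂) (Set.Icc 0 1) ∧
    kl (tilt P₁ P₂ 0) P₂ = kl P₁ P₂ ∧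
    kl (tilt P₁ P₂ 1) P₂ = 0 ∧
    (∃! ls : ℝ, ls ∈ Set.Ioo (0:ℝ) 1 ∧
      kl (tilt P₁ P₂ ls) P₁ = kl (tilt P₁ P₂ ls) P₂) ∧
    (∀ ls ∈ Set.Ioo (0:ℝ) 1,
      kl (tilt P₁ P₂ ls) P₁ = kl (tilt P₁ P₂ ls) P₂ → 0 < kl (tilt P₁ P₂ ls) P₁) := by
  have hZpos : ∀ l, 0 < chZ0 P₁ P₂ l := chZ0_pos h1pos
  have hVpos : ∀ l, 0 < chV P₁ P₂ l := chV_pos h1pos h2pos h1sum h2sum hne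
  have hFd : ∀ l, HasDerivAt (chF P₁ P₂) (l * chV P₁ P₂ l) l := chF_hasDerivAt h1pos
  have hGd : ∀ l, HasDerivAt (chG P₁ P₂) ((l - 1) * chV P₁ P₂ l) l := chG_hasDerivAt h1pos
  have hHd : ∀ l, HasDerivAt (chH P₁ P₂) (chV P₁ P₂ l) l := chH_hasDerivAt h1pos
  have hFdiff : Differentiable ℝ (chF P₁ P₂) := fun y => (hFd y).differentiableAt
  have hFcont : Continuous (chF P₁ P₂) := hFdiff.continuous
  have hGdiff : Differentiable ℝ (chG P₁ P₂) := fun y => (hGd y).differentiableAt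
  have hGcont : Continuous (chG P₁ P₂) := hGdiff.continuous
  have hHdiff : Differentiable ℝ (chH P₁ P₂) := fun y => (hHd y).differentiableAt
  have hHcont : Continuous (chH P₁ P₂) := hHdiff.continuous
  have hF : ∀ l, kl (tilt P₁ P₂ l) P₁ = chF P₁ P₂ l := chF_eq h1pos h2pos
  have hG : ∀ l, kl (tilt P₁ P₂ l) P₂ = chG P₁ P₂ l := chG_eq h1pos h2pos
  have hFSM : StrictMonoOn (chF P₁ P₂) (Set.Icc 0 1) := by
    refine strictMonoOn_of_deriv_pos (convex_Icc 0 1) hFcont.continuousOn fun x hx => ?_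
    rw [interior_Icc] at hx
    rw [(hFd x).deriv]
    exact mul_pos hx.1 (hVpos x)
  have hGSA : StrictAntiOn (chG P₁ P₂) (Set.Icc 0 1) := by
    refine strictAntiOn_of_deriv_neg (convex_Icc 0 1) hGcont.continuousOn fun x hx => ?_
    rw [interior_Icc] at hx
    rw [(hGd x).deriv]
    exact mul_neg_of_neg_of_pos (by linarith [hx.2]) (hVpos x)
  have hHSM : StrictMonoOn (chH P₁ P₂) (Set.Icc 0 1) := by
    refine strictMonoOn_of_deriv_pos (convex_Icc 0 1) hHcont.continuousOn fun x hx => ?_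
    rw [(hHd x).deriv]
    exact hVpos x
  have hZ00 : chZ0 P₁ P₂ 0 = 1 := by
    rw [chZ0]
    simp [h1sum]
  have hZ01 : chZ0 P₁ P₂ 1 = 1 := by
    rw [chZ0]
    calc ∑ x, P₁ x * Real.exp (1 * chT P₁ P₂ x) = ∑ x, P₂ x :=
        Finset.sum_congr rfl fun x _ => by rw [one_mul, ch_exp_tf h1pos h2pos x]
      _ = 1 := h2sum
  have hZ10 : chZ1 P₁ P₂ 0 = -kl P₁ P₂ := by
    rw [chZ1, kl, ← Finset.sum_neg_distrib]
    refine Finset.sum_congr rfl fun x _ => ?_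
    rw [zero_mul, Real.exp_zero, mul_one, chT,
      show P₁ x / P₂ x = (P₂ x / P₁ x)⁻¹ by rw [inv_div], Real.log_inv]
    ring
  have hZ11 : chZ1 P₁ P₂ 1 = kl P₂ P₁ := by
    rw [chZ1, kl]
    refine Finset.sum_congr rfl fun x _ => ?_
    rw [one_mul, show Real.log (P₂ x / P₁ x) = chT P₁ P₂ x from rfl,
      ← ch_exp_tf h1pos h2pos x]
    ring
  have hF0 : chF P₁ P₂ 0 = 0 := by rw [chF, chH, hZ00]; simp
  have hF1 : chF P₁ P₂ 1 = kl P₂ P₁ := by rw [chF, chH, hZ01, hZ11]; simp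
  have hG0 : chG P₁ P₂ 0 = kl P₁ P₂ := by rw [chG, chH, hZ00, hZ10]; simp
  have hG1 : chG P₁ P₂ 1 = 0 := by rw [chG, chH, hZ01]; simp
  have hH0 : chH P₁ P₂ 0 = -kl P₁ P₂ := by rw [chH, hZ00, hZ10]; simp
  have hH1 : chH P₁ P₂ 1 = kl P₂ P₁ := by rw [chH, hZ01, hZ11]; simp
  have hkl12 : 0 < kl P₁ P₂ := ch_kl_pos h1pos h2pos h1sum h2sum hne
  have hkl21 : 0 < kl P₂ P₁ := ch_kl_pos h2pos h1pos h2sum h1sum (Ne.symm hne)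
  have h0mem : (0 : ℝ) ∈ Set.Ioo (chH P₁ P₂ 0) (chH P₁ P₂ 1) := by
    rw [hH0, hH1]
    exact ⟨by linarith, by linarith⟩
  obtain ⟨ls, hls, hHls⟩ :=
    intermediate_value_Ioo (by norm_num : (0:ℝ) ≤ 1) hHcont.continuousOn h0mem
  refine ⟨(hFcont.continuousOn).congr fun x _ => hF x, ?_, ?_, ?_,
    (hGcont.continuousOn).congr fun x _ => hG x, ?_, ?_, ?_, ?_, ?_⟩
  · intro a ha b hb hab
    simp only
    rw [hF a, hF b]
    exact hFSM ha hb hab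
  · rw [hF 0, hF0]
  · rw [hF 1, hF1]
  · intro a ha b hb hab
    simp only
    rw [hG a, hG b]
    exact hGSA ha hb hab
  · rw [hG 0, hG0]
  · rw [hG 1, hG1]
  · refine ⟨ls, ⟨hls, ?_⟩, ?_⟩
    · rw [hF ls, hG ls, chF, chG, hHls]
      ring
    · rintro y ⟨hy, hykl⟩
      have hHy : chH P₁ P₂ y = 0 := by
        rw [hF y, hG y, chF, chG] at hykl
        linear_combination hykl
      exact hHSM.injOn (Set.Ioo_subset_Icc_self hy) (Set.Ioo_subset_Icc_self hls)
        (by rw [hHy, hHls])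
  · intro l0 hl0 heq
    rw [hF l0]
    have h := hFSM (Set.left_mem_Icc.mpr (by norm_num)) (Set.Ioo_subset_Icc_self hl0) hl0.1
    rwa [hF0] at h
end

section
/- As γ → 0⁺, the exponents E₁(γ) and E₂(γ) approach the optimal sequential error exponents: lim_{γ→0⁺} E₁(γ) = D(P₂‖P₁) and lim_{γ→0⁺} E₂(γ) = D(P₁‖P₂). -/
open Real Filter Finset MeasureTheory
open scoped Classical

variable {𝒳 : Type*} [Fintype 𝒳] [DecidableEq 𝒳] [Nonempty 𝒳]

section Aux

private lemma cheb_aux (w a b : 𝒳 → ℝ) (hw : ∀ x, 0 ≤ w x)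
    (hab : ∀ x y, 0 ≤ (a x - a y) * (b x - b y)) :
    (∑ x, w x * a x) * (∑ x, w x * b x) ≤ (∑ x, w x) * (∑ x, w x * (a x * b x)) := by
  have h0 : 0 ≤ ∑ x, ∑ y, w x * w y * ((a x - a y) * (b x - b y)) :=
    Finset.sum_nonneg fun x _ => Finset.sum_nonneg fun y _ =>
      mul_nonneg (mul_nonneg (hw x) (hw y)) (hab x y)
  have hexp : ∑ x, ∑ y, w x * w y * ((a x - a y) * (b x - b y))
      = 2 * ((∑ x, w x) * (∑ x, w x * (a x * b x)) - (∑ x, w x * a x) * (∑ x, w x * b x)) := by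
    have hx : ∀ x : 𝒳, ∑ y, w x * w y * ((a x - a y) * (b x - b y))
        = (w x * (a x * b x)) * (∑ y, w y) - (w x * a x) * (∑ y, w y * b y)
          - (w x * b x) * (∑ y, w y * a y) + w x * (∑ y, w y * (a y * b y)) := by
      intro x
      simp only [Finset.mul_sum, ← Finset.sum_sub_distrib, ← Finset.sum_add_distrib]
      exact Finset.sum_congr rfl fun y _ => by ring
    rw [Finset.sum_congr rfl fun x _ => hx x]
    simp only [Finset.sum_sub_distrib, Finset.sum_add_distrib, ← Finset.sum_mul,
      ← Finset.mul_sum]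
    ring
  linarith

private lemma kl_ge_aux (Q P : 𝒳 → ℝ) (hQ : ∀ x, 0 < Q x) (hP : ∀ x, 0 < P x) :
    ∀ x ∈ Finset.univ, Q x - P x ≤ Q x * Real.log (Q x / P x) := by
  intro x _
  have hlog : Real.log (P x / Q x) ≤ P x / Q x - 1 :=
    Real.log_le_sub_one_of_pos (div_pos (hP x) (hQ x))
  have hrw : Real.log (Q x / P x) = - Real.log (P x / Q x) := by
    rw [← Real.log_inv, inv_div]
  have hq := hQ x
  rw [hrw]
  have h2 : Q x * (1 - P x / Q x) ≤ Q x * (- Real.log (P x / Q x)) :=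
    mul_le_mul_of_nonneg_left (by linarith) hq.le
  have h3 : Q x * (1 - P x / Q x) = Q x - P x := by field_simp
  linarith

private lemma kl_nonneg_aux (Q P : 𝒳 → ℝ) (hQ : ∀ x, 0 < Q x) (hP : ∀ x, 0 < P x)
    (hQs : ∑ x, Q x = 1) (hPs : ∑ x, P x = 1) : 0 ≤ kl Q P := by
  calc (0:ℝ) = ∑ x, Q x - ∑ x, P x := by rw [hQs, hPs]; ring
    _ = ∑ x, (Q x - P x) := (Finset.sum_sub_distrib _ _).symm
    _ ≤ ∑ x, Q x * Real.log (Q x / P x) := Finset.sum_le_sum (kl_ge_aux Q P hQ hP)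
    _ = kl Q P := rfl

private lemma kl_pos_aux (Q P : 𝒳 → ℝ) (hQ : ∀ x, 0 < Q x) (hP : ∀ x, 0 < P x)
    (hQs : ∑ x, Q x = 1) (hPs : ∑ x, P x = 1) (hne : Q ≠ P) : 0 < kl Q P := by
  obtain ⟨x₀, hx₀⟩ := Function.ne_iff.mp hne
  have hstrict : Q x₀ - P x₀ < Q x₀ * Real.log (Q x₀ / P x₀) := by
    have hne1 : P x₀ / Q x₀ ≠ 1 := by
      intro h1
      exact hx₀ ((div_eq_one_iff_eq (hQ x₀).ne').mp h1).symm
    have hlog : Real.log (P x₀ / Q x₀) < P x₀ / Q x₀ - 1 :=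
      Real.log_lt_sub_one_of_pos (div_pos (hP x₀) (hQ x₀)) hne1
    have hrw : Real.log (Q x₀ / P x₀) = - Real.log (P x₀ / Q x₀) := by
      rw [← Real.log_inv, inv_div]
    have hq := hQ x₀
    rw [hrw]
    have h2 : Q x₀ * (1 - P x₀ / Q x₀) < Q x₀ * (- Real.log (P x₀ / Q x₀)) :=
      mul_lt_mul_of_pos_left (by linarith) hq
    have h3 : Q x₀ * (1 - P x₀ / Q x₀) = Q x₀ - P x₀ := by field_simp
    linarith
  calc (0:ℝ) = ∑ x, Q x - ∑ x, P x := by rw [hQs, hPs]; ring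
    _ = ∑ x, (Q x - P x) := (Finset.sum_sub_distrib _ _).symm
    _ < ∑ x, Q x * Real.log (Q x / P x) :=
        Finset.sum_lt_sum (kl_ge_aux Q P hQ hP) ⟨x₀, Finset.mem_univ x₀, hstrict⟩
    _ = kl Q P := rfl

private lemma tilt_swap_aux (P₁ P₂ : 𝒳 → ℝ) (l : ℝ) :
    tilt P₂ P₁ (1 - l) = tilt P₁ P₂ l := by
  funext x
  simp only [tilt, sub_sub_cancel]
  rw [Finset.sum_congr rfl fun a _ => mul_comm (P₂ a ^ l) (P₁ a ^ (1 - l)),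
    mul_comm (P₂ x ^ l) (P₁ x ^ (1 - l))]

private lemma E1_main (P₁ P₂ : 𝒳 → ℝ)
    (h1pos : ∀ x, 0 < P₁ x) (h2pos : ∀ x, 0 < P₂ x)
    (h1sum : ∑ x, P₁ x = 1) (h2sum : ∑ x, P₂ x = 1)
    (hne : P₁ ≠ P₂) :
    Filter.Tendsto (fun γ => E1exp P₁ P₂ γ) (nhdsWithin 0 (Set.Ioi 0))
      (nhds (kl P₂ P₁)) := by
  set r : 𝒳 → ℝ := fun x => Real.log (P₂ x) - Real.log (P₁ x) with hr
  set Z : ℝ → ℝ := fun l => ∑ a, P₁ a ^ (1 - l) * P₂ a ^ l with hZ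
  have hw : ∀ (l : ℝ) (x : 𝒳), P₁ x ^ (1 - l) * P₂ x ^ l = P₁ x * Real.exp (l * r x) := by
    intro l x
    rw [Real.rpow_def_of_pos (h1pos x), Real.rpow_def_of_pos (h2pos x),
      ← Real.exp_add]
    conv_rhs => rw [← Real.exp_log (h1pos x), ← Real.exp_add]
    congr 1
    simp only [hr]; ring
  have hZpos : ∀ l : ℝ, 0 < Z l := by
    intro l
    exact Finset.sum_pos (fun a _ => by
      have := h1pos a; have := h2pos a; positivity) Finset.univ_nonempty
  have htilt : ∀ (l : ℝ) (x : 𝒳), tilt P₁ P₂ l x = P₁ x * Real.exp (l * r x) / Z l := by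
    intro l x; rw [tilt, hw]
  have htiltpos : ∀ (l : ℝ) (x : 𝒳), 0 < tilt P₁ P₂ l x := by
    intro l x; rw [htilt]
    have := hZpos l; have := h1pos x; positivity
  have htiltsum : ∀ l : ℝ, ∑ x, tilt P₁ P₂ l x = 1 := by
    intro l
    rw [Finset.sum_congr rfl fun x _ => htilt l x, ← Finset.sum_div]
    rw [show ∑ x, P₁ x * Real.exp (l * r x) = Z l from
      (Finset.sum_congr rfl fun x _ => (hw l x).symm)]
    exact div_self (hZpos l).ne'
  have hP2eq : ∀ x, P₂ x = P₁ x * Real.exp (r x) := by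
    intro x
    have h1 := (h1pos x).ne'
    simp only [hr, Real.exp_sub, Real.exp_log (h1pos x), Real.exp_log (h2pos x)]
    field_simp
  have hklQ1 : ∀ l : ℝ, kl (tilt P₁ P₂ l) P₁
      = l * (∑ x, tilt P₁ P₂ l x * r x) - Real.log (Z l) := by
    intro l
    have hterm : ∀ x, tilt P₁ P₂ l x * Real.log (tilt P₁ P₂ l x / P₁ x)
        = l * (tilt P₁ P₂ l x * r x) - tilt P₁ P₂ l x * Real.log (Z l) := by
      intro x
      have hq : tilt P₁ P₂ l x / P₁ x = Real.exp (l * r x) / Z l := by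
        rw [htilt]
        have h1 := (h1pos x).ne'
        have hZ' := (hZpos l).ne'
        field_simp
      rw [hq, Real.log_div (Real.exp_ne_zero _) (hZpos l).ne', Real.log_exp]
      ring
    rw [kl, Finset.sum_congr rfl fun x _ => hterm x, Finset.sum_sub_distrib,
      ← Finset.mul_sum, ← Finset.sum_mul, htiltsum, one_mul]
  have hkl21 : kl P₂ P₁ = ∑ x, P₂ x * r x := by
    rw [kl]
    exact Finset.sum_congr rfl fun x _ => by
      rw [Real.log_div (h2pos x).ne' (h1pos x).ne']
  have hklP2Q : ∀ l : ℝ, kl P₂ (tilt P₁ P₂ l)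
      = (1 - l) * (∑ x, P₂ x * r x) + Real.log (Z l) := by
    intro l
    have hterm : ∀ x, P₂ x * Real.log (P₂ x / tilt P₁ P₂ l x)
        = (1 - l) * (P₂ x * r x) + P₂ x * Real.log (Z l) := by
      intro x
      have hq : P₂ x / tilt P₁ P₂ l x = Real.exp ((1 - l) * r x) * Z l := by
        rw [htilt, hP2eq x]
        have h1 := (h1pos x).ne'
        have hZ' := (hZpos l).ne'
        have he : Real.exp (r x) = Real.exp ((1 - l) * r x) * Real.exp (l * r x) := by
          rw [← Real.exp_add]; congr 1; ring
        rw [he]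
        have hel := (Real.exp_pos (l * r x)).ne'
        field_simp
      rw [hq, Real.log_mul (Real.exp_ne_zero _) (hZpos l).ne', Real.log_exp]
      ring
    rw [kl, Finset.sum_congr rfl fun x _ => hterm x, Finset.sum_add_distrib,
      ← Finset.mul_sum, ← Finset.sum_mul, h2sum, one_mul]
  have hcheby : ∀ l ∈ Set.Icc (0:ℝ) 1,
      (∑ x, tilt P₁ P₂ l x * r x) ≤ ∑ x, P₂ x * r x := by
    intro l hl
    set w' : 𝒳 → ℝ := fun x => P₁ x * Real.exp (l * r x) with hwdef
    set b : 𝒳 → ℝ := fun x => Real.exp ((1 - l) * r x) with hbdef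
    have hwpos : ∀ x, 0 ≤ w' x := fun x => by
      have := h1pos x; positivity
    have hmono : ∀ x y, 0 ≤ (r x - r y) * (b x - b y) := by
      intro x y
      rcases le_total (r x) (r y) with h | h
      · have hb : b x ≤ b y := Real.exp_le_exp.mpr
          (mul_le_mul_of_nonneg_left h (by linarith [hl.2]))
        nlinarith
      · have hb : b y ≤ b x := Real.exp_le_exp.mpr
          (mul_le_mul_of_nonneg_left h (by linarith [hl.2]))
        exact mul_nonneg (by linarith) (by linarith)
    have hcb := cheb_aux w' r b hwpos hmono
    have hwb : ∀ x, w' x * b x = P₂ x := by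
      intro x
      rw [hwdef, hbdef, hP2eq x]
      simp only [mul_assoc, ← Real.exp_add]
      congr 2
      ring
    have hsw : ∑ x, w' x = Z l := Finset.sum_congr rfl fun x _ => (hw l x).symm
    have hswb : ∑ x, w' x * b x = 1 := by
      rw [Finset.sum_congr rfl fun x _ => hwb x, h2sum]
    have hswab : ∑ x, w' x * (r x * b x) = ∑ x, P₂ x * r x := by
      refine Finset.sum_congr rfl fun x _ => ?_
      rw [← hwb x]; ring
    have htiltr : ∑ x, tilt P₁ P₂ l x * r x = (∑ x, w' x * r x) / Z l := by
      rw [Finset.sum_div]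
      exact Finset.sum_congr rfl fun x _ => by rw [htilt]; ring
    rw [htiltr, div_le_iff₀ (hZpos l)]
    calc (∑ x, w' x * r x) = (∑ x, w' x * r x) * (∑ x, w' x * b x) := by
          rw [hswb, mul_one]
      _ ≤ (∑ x, w' x) * (∑ x, w' x * (r x * b x)) := hcb
      _ = (∑ x, P₂ x * r x) * Z l := by rw [hsw, hswab]; ring
  have hkey : ∀ l ∈ Set.Icc (0:ℝ) 1, kl (tilt P₁ P₂ l) P₁ ≤ kl P₂ P₁ := by
    intro l hl
    have h1 := kl_nonneg_aux P₂ (tilt P₁ P₂ l) h2pos (htiltpos l) h2sum (htiltsum l)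
    rw [hklP2Q l] at h1
    have h3 : l * (∑ x, tilt P₁ P₂ l x * r x) ≤ l * (∑ x, P₂ x * r x) :=
      mul_le_mul_of_nonneg_left (hcheby l hl) hl.1
    rw [hklQ1 l, hkl21]
    linarith
  have hub : ∀ γ : ℝ, E1exp P₁ P₂ γ ≤ kl P₂ P₁ := by
    intro γ
    apply Real.sSup_le
    · rintro E ⟨l, hl, _, rfl⟩
      exact hkey l hl
    · exact kl_nonneg_aux P₂ P₁ h2pos h1pos h2sum h1sum
  have hbdd : ∀ γ : ℝ, BddAbove {E | ∃ l ∈ Set.Icc (0:ℝ) 1,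
      γ ≤ kl (tilt P₁ P₂ l) P₂ ∧ E = kl (tilt P₁ P₂ l) P₁} :=
    fun γ => ⟨kl P₂ P₁, by rintro E ⟨l, hl, _, rfl⟩; exact hkey l hl⟩
  have htne : ∀ l : ℝ, l < 1 → tilt P₁ P₂ l ≠ P₂ := by
    intro l hl heq
    apply hne
    have hconst : ∀ x : 𝒳, Real.exp ((l - 1) * r x) = Z l := by
      intro x
      have hx := congrFun heq x
      rw [htilt, hP2eq x] at hx
      have h1 := (h1pos x).ne'
      have hZ' := (hZpos l).ne'
      have hex : Real.exp (l * r x) = Z l * Real.exp (r x) := by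
        field_simp at hx
        nlinarith [h1pos x, Real.exp_pos (r x), Real.exp_pos (l * r x), hZpos l, hx]
      rw [show (l - 1) * r x = l * r x + (- r x) from by ring, Real.exp_add, hex,
        mul_assoc, ← Real.exp_add]
      simp
    have hsame : ∀ x y : 𝒳, r x = r y := by
      intro x y
      have h := (hconst x).trans (hconst y).symm
      have h2 := Real.exp_injective h
      have hl1 : l - 1 ≠ 0 := by linarith
      exact mul_left_cancel₀ hl1 h2
    funext x
    obtain ⟨x₀⟩ := (inferInstance : Nonempty 𝒳)
    have hsum : (1:ℝ) = Real.exp (r x₀) * 1 := by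
      calc (1:ℝ) = ∑ y, P₂ y := h2sum.symm
        _ = ∑ y, Real.exp (r x₀) * P₁ y := by
            refine Finset.sum_congr rfl fun y _ => ?_
            rw [hP2eq y, hsame y x₀]; ring
        _ = Real.exp (r x₀) * ∑ y, P₁ y := by rw [← Finset.mul_sum]
        _ = Real.exp (r x₀) * 1 := by rw [h1sum]
    have hexp1 : Real.exp (r x₀) = 1 := by linarith [hsum]
    rw [hP2eq x, hsame x x₀, hexp1, mul_one]
  -- continuity of l ↦ kl (tilt l) P₁
  have hZc : Continuous Z := by
    have hZeq : Z = fun l => ∑ a, P₁ a * Real.exp (l * r a) :=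
      funext fun l => Finset.sum_congr rfl fun a _ => hw l a
    rw [hZeq]
    exact continuous_finset_sum _ fun a _ => by fun_prop
  have htiltc : ∀ x : 𝒳, Continuous fun l : ℝ => tilt P₁ P₂ l x := by
    intro x
    have : (fun l : ℝ => tilt P₁ P₂ l x)
        = fun l => P₁ x * Real.exp (l * r x) / Z l := funext fun l => htilt l x
    rw [this]
    exact (by fun_prop : Continuous fun l : ℝ => P₁ x * Real.exp (l * r x)).div hZc
      fun l => (hZpos l).ne'
  have hgc : Continuous fun l : ℝ => kl (tilt P₁ P₂ l) P₁ := by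
    simp only [kl]
    refine continuous_finset_sum _ fun x _ => ?_
    refine (htiltc x).mul (Continuous.log ((htiltc x).div_const (P₁ x)) ?_)
    intro l
    exact (div_pos (htiltpos l x) (h1pos x)).ne'
  have h1t : tilt P₁ P₂ 1 = P₂ := by
    funext x
    simp only [tilt, sub_self, Real.rpow_zero, Real.rpow_one, one_mul, h2sum, div_one]
  rw [Metric.tendsto_nhdsWithin_nhds]
  intro ε hε
  obtain ⟨δ, hδpos, hδ⟩ := Metric.continuousAt_iff.mp (hgc.continuousAt (x := 1)) ε hε
  set l₀ : ℝ := max (1 - δ/2) (1/2) with hl₀def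
  have hl₀lt : l₀ < 1 := by
    apply max_lt <;> linarith
  have hl₀mem : l₀ ∈ Set.Icc (0:ℝ) 1 := ⟨le_trans (by norm_num) (le_max_right _ _), hl₀lt.le⟩
  have hl₀near : dist l₀ 1 < δ := by
    rw [Real.dist_eq, abs_of_nonpos (by linarith)]
    have : 1 - δ/2 ≤ l₀ := le_max_left _ _
    linarith
  have hfl₀ : 0 < kl (tilt P₁ P₂ l₀) P₂ :=
    kl_pos_aux _ _ (htiltpos l₀) h2pos (htiltsum l₀) h2sum (htne l₀ hl₀lt)
  refine ⟨kl (tilt P₁ P₂ l₀) P₂, hfl₀, ?_⟩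
  intro γ hγ hdist
  have hγpos : (0:ℝ) < γ := hγ
  have hγle : γ ≤ kl (tilt P₁ P₂ l₀) P₂ := by
    rw [Real.dist_eq, sub_zero, abs_of_pos hγpos] at hdist
    exact hdist.le
  have hlow : kl (tilt P₁ P₂ l₀) P₁ ≤ E1exp P₁ P₂ γ :=
    le_csSup (hbdd γ) ⟨l₀, hl₀mem, hγle, rfl⟩
  have hup := hub γ
  have hnear := hδ hl₀near
  rw [Real.dist_eq, h1t, abs_lt] at hnear
  rw [Real.dist_eq, abs_lt]
  constructor <;> linarith

end Aux

/-- As `γ → 0⁺`, `E₁(γ) → D(P₂‖P₁)` and `E₂(γ) → D(P₁‖P₂)`: the almost-fixed-length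
exponents approach the optimal sequential error exponents. -/
theorem Eexp_tendsto_sequential (P₁ P₂ : 𝒳 → ℝ)
    (h1pos : ∀ x, 0 < P₁ x) (h2pos : ∀ x, 0 < P₂ x)
    (h1sum : ∑ x, P₁ x = 1) (h2sum : ∑ x, P₂ x = 1)
    (hne : P₁ ≠ P₂) :
    Filter.Tendsto (fun γ => E1exp P₁ P₂ γ) (nhdsWithin 0 (Set.Ioi 0))
      (nhds (kl P₂ P₁)) ∧
    Filter.Tendsto (fun γ => E2exp P₁ P₂ γ) (nhdsWithin 0 (Set.Ioi 0))
      (nhds (kl P₁ P₂)) := by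
  constructor
  · exact E1_main P₁ P₂ h1pos h2pos h1sum h2sum hne
  · have hmain := E1_main P₂ P₁ h2pos h1pos h2sum h1sum (fun h => hne h.symm)
    have heq : (fun γ => E2exp P₁ P₂ γ) = fun γ => E1exp P₂ P₁ γ := by
      funext γ
      rw [E1exp, E2exp]
      congr 1
      ext E
      constructor
      · rintro ⟨l, hl, hγ, hE⟩
        exact ⟨1 - l, ⟨by linarith [hl.2], by linarith [hl.1]⟩,
          by rwa [tilt_swap_aux P₁ P₂ l], by rwa [tilt_swap_aux P₁ P₂ l]⟩
      · rintro ⟨l, hl, hγ, hE⟩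
        refine ⟨1 - l, ⟨by linarith [hl.2], by linarith [hl.1]⟩, ?_, ?_⟩
        · rwa [tilt_swap_aux P₂ P₁ l]
        · rwa [tilt_swap_aux P₂ P₁ l]
    rw [heq]
    exact hmain
end
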